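/- arXiv:math/0501383 — 7 statements merged into one kernel-verified Lean document; each statement's English description precedes it below -/
import Mathlib

section
/- In any bicategory, if a 1-cell s : A → B admits a right lifting (t, ε) of the identity 1_B through s, and this lifting is respected by s (meaning ε ◁ s exhibits t ∘ s as the right lifting of s through s), then s is left adjoint to t with counit ε. -/
open CategoryTheory Bicategory

universe w v u

variable {B : Type u} [Bicategory.{w, v} B]

/-- Whiskering a right lift of `g` through `f` with a 1-cell `h : x ⟶ c`. -/
def rightLiftWhisker {a b c : B} {f : b ⟶ a} {g : c ⟶ a} (t : RightLift f g) {x : B}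
    (h : x ⟶ c) : RightLift f (h ≫ g) :=
  RightLift.mk (h ≫ t.lift) ((α_ h t.lift f).hom ≫ h ◁ t.counit)

theorem rightLift_hom_ext {a b c : B} {f : b ⟶ a} {g : c ⟶ a} {t : RightLift f g}
    (H : RightLift.IsKan t) {k : c ⟶ b} {τ τ' : k ⟶ t.lift}
    (w : τ ▷ f ≫ t.counit = τ' ▷ f ≫ t.counit) : τ = τ' :=
  CostructuredArrow.IsUniversal.hom_ext H w

/-- if `(t, ε)` is a right lifting of the identity `𝟙 b` through `s`, and this
lifting is respected by `s` itself, then `s` is left adjoint to `t` with counit `ε`. -/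
theorem isLeftAdjoint_of_rightLift_id_respected {a b : B} (s : a ⟶ b) (t : b ⟶ a)
    (ε' : t ≫ s ⟶ 𝟙 b)
    (H : RightLift.IsKan (RightLift.mk t ε'))
    (Hs : RightLift.IsKan (rightLiftWhisker (RightLift.mk t ε') s)) :
    ∃ adj : s ⊣ t, adj.counit = ε' := by
  let η : 𝟙 a ⟶ s ≫ t :=
    CostructuredArrow.IsUniversal.lift Hs (RightLift.mk (𝟙 a) ((λ_ s).hom ≫ (ρ_ s).inv))
  have Hη : η ▷ s ≫ ((α_ s t s).hom ≫ s ◁ ε') = (λ_ s).hom ≫ (ρ_ s).inv :=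
    CostructuredArrow.IsUniversal.fac Hs (RightLift.mk (𝟙 a) ((λ_ s).hom ≫ (ρ_ s).inv))
  have left : leftZigzag η ε' = (λ_ s).hom ≫ (ρ_ s).inv := by
    simpa [leftZigzag, bicategoricalComp] using Hη
  refine ⟨{ unit := η, counit := ε', left_triangle := left, right_triangle := ?_ }, rfl⟩
  apply (cancel_mono (λ_ t).hom).mp
  apply rightLift_hom_ext H
  calc (rightZigzag η ε' ≫ (λ_ t).hom) ▷ s ≫ ε'
    _ = 𝟙 _ ⊗≫ t ◁ η ▷ s ⊗≫ (ε' ▷ (t ≫ s) ≫ 𝟙 b ◁ ε') ⊗≫ 𝟙 _ := by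
        rw [rightZigzag]; bicategory
    _ = 𝟙 _ ⊗≫ t ◁ (η ▷ s ⊗≫ s ◁ ε') ⊗≫ ε' ⊗≫ 𝟙 _ := by
        rw [← whisker_exchange]; bicategory
    _ = 𝟙 _ ⊗≫ t ◁ ((λ_ s).hom ≫ (ρ_ s).inv) ⊗≫ ε' ⊗≫ 𝟙 _ := by
        rw [← leftZigzag, left]
    _ = (((ρ_ t).hom ≫ (λ_ t).inv) ≫ (λ_ t).hom) ▷ s ≫ ε' := by
        bicategory
end

section
/- In any bicategory, a 1-cell s : A → B has a right adjoint if and only if for every 1-cell g : C → B the right lifting of g through s exists and is absolute (respected by precomposition with every 1-cell into C). -/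
open CategoryTheory Bicategory

universe w v u

variable {B : Type u} [Bicategory.{w, v} B]

/-- A right lift is absolute when it is respected by (whiskering with) every 1-cell. -/
def RightLiftIsAbsKan {a b c : B} {f : b ⟶ a} {g : c ⟶ a} (t : RightLift f g) : Prop :=
  ∀ (x : B) (h : x ⟶ c), Nonempty (RightLift.IsKan (rightLiftWhisker t h))

/-- The canonical right lift of `g` through `s` coming from an adjunction `s ⊣ u`. -/
def adjRightLift {a b c : B} {s : a ⟶ b} {u : b ⟶ a} (adj : s ⊣ u) (g : c ⟶ b) :
    RightLift s g :=
  RightLift.mk (g ≫ u) ((α_ g u s).hom ≫ g ◁ adj.counit ≫ (ρ_ g).hom)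

/-- The canonical right lift coming from an adjunction is a Kan lift. -/
def adjRightLiftIsKan {a b c : B} {s : a ⟶ b} {u : b ⟶ a} (adj : s ⊣ u) (g : c ⟶ b) :
    RightLift.IsKan (adjRightLift adj g) :=
  Limits.IsTerminal.ofUniqueHom
    (fun k ↦
      let l : c ⟶ a := k.left
      let ν : l ≫ s ⟶ g := k.hom
      RightLift.homMk
        (𝟙 _ ⊗≫ l ◁ adj.unit ⊗≫ ν ▷ u ⊗≫ 𝟙 _ : l ⟶ g ≫ u) <| by
      show _ = ν
      dsimp only [adjRightLift, CostructuredArrow.mk_left, CostructuredArrow.mk_hom_eq_self]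
      calc _
        _ = 𝟙 _ ⊗≫ l ◁ adj.unit ▷ s ⊗≫ (ν ▷ (u ≫ s) ≫ g ◁ adj.counit) ⊗≫ 𝟙 _ := by
          change _ ▷ s ≫ ((α_ g u s).hom ≫ g ◁ adj.counit ≫ (ρ_ g).hom) = _; bicategory
        _ = 𝟙 _ ⊗≫ l ◁ leftZigzag adj.unit adj.counit ⊗≫ ν ⊗≫ 𝟙 _ := by
          rw [← whisker_exchange, leftZigzag]; bicategory
        _ = ν := by
          rw [adj.left_triangle]; bicategory)
    (fun k m ↦ by
      ext
      let l : c ⟶ a := k.left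
      let ν : l ≫ s ⟶ g := k.hom
      let ml : l ⟶ g ≫ u := m.left
      have hm : ml ▷ s ≫ ((α_ g u s).hom ≫ g ◁ adj.counit ≫ (ρ_ g).hom) = ν :=
        RightLift.w m
      dsimp only [CostructuredArrow.homMk_left]
      show ml = 𝟙 _ ⊗≫ l ◁ adj.unit ⊗≫ ν ▷ u ⊗≫ 𝟙 _
      calc ml
        _ = 𝟙 _ ⊗≫ ml ⊗≫ g ◁ rightZigzag adj.unit adj.counit ⊗≫ 𝟙 _ := by
          rw [adj.right_triangle]; bicategory
        _ = 𝟙 _ ⊗≫ (l ◁ adj.unit ≫ ml ▷ (s ≫ u)) ⊗≫ g ◁ adj.counit ▷ u ⊗≫ 𝟙 _ := by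
          rw [rightZigzag, whisker_exchange]; bicategory
        _ = 𝟙 _ ⊗≫ l ◁ adj.unit ⊗≫ (ml ▷ s ≫ (α_ g u s).hom ≫ g ◁ adj.counit ≫ (ρ_ g).hom) ▷ u ⊗≫ 𝟙 _ := by
          bicategory
        _ = _ := by rw [hm])

/-- Coherence lemma relating the whiskered adjoint lift to the adjoint lift. -/
theorem adjRightLift_whisker_aux {a b c x : B} (s : a ⟶ b) (u : b ⟶ a) (eps : u ≫ s ⟶ 𝟙 b)
    (g : c ⟶ b) (h : x ⟶ c) :
    (α_ h g u).hom ▷ s ≫ (α_ h (g ≫ u) s).hom ≫ h ◁ ((α_ g u s).hom ≫ g ◁ eps ≫ (ρ_ g).hom) =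
      (α_ (h ≫ g) u s).hom ≫ (h ≫ g) ◁ eps ≫ (ρ_ (h ≫ g)).hom := by
  bicategory

/-- Transport `IsKan` along an isomorphism of right lifts. -/
def rightLiftIsKanOfIso {a b c : B} {f : b ⟶ a} {g : c ⟶ a} {t t' : RightLift f g}
    (i : t ≅ t') (H : RightLift.IsKan t) : RightLift.IsKan t' :=
  Limits.IsTerminal.ofIso H i

/-- a 1-cell `s : a ⟶ b` has a right adjoint if and only if for every 1-cell
`g : c ⟶ b` the right lifting of `g` through `s` exists and is absolute. -/
theorem isLeftAdjoint_iff_forall_absolute_rightLift {a b : B} (s : a ⟶ b) :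
    IsLeftAdjoint s ↔
      ∀ (c : B) (g : c ⟶ b), ∃ t : RightLift s g,
        Nonempty (RightLift.IsKan t) ∧ RightLiftIsAbsKan t := by
  constructor
  · intro h
    obtain ⟨⟨u, adj⟩⟩ := h.nonempty
    intro c g
    refine ⟨adjRightLift adj g, ⟨adjRightLiftIsKan adj g⟩, fun x h ↦
      ⟨rightLiftIsKanOfIso ?_ (adjRightLiftIsKan adj (h ≫ g))⟩⟩
    refine CostructuredArrow.isoMk (α_ h g u) ?_
    dsimp only [adjRightLift, rightLiftWhisker, CostructuredArrow.mk_left,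
      CostructuredArrow.mk_hom_eq_self, Iso.symm_hom, RightLift.mk, RightLift.lift,
      RightLift.counit, postcomp]
    exact adjRightLift_whisker_aux s u adj.counit g h
  · intro H
    obtain ⟨t, ⟨hK⟩, habs⟩ := H b (𝟙 b)
    obtain ⟨hW⟩ := habs a s
    set u : b ⟶ a := t.lift with hu
    set eps : u ≫ s ⟶ 𝟙 b := t.counit with heps
    let η : 𝟙 a ⟶ s ≫ u :=
      hW.lift (RightLift.mk (𝟙 a) ((λ_ s).hom ≫ (ρ_ s).inv))
    have Hη : η ▷ s ≫ ((α_ s u s).hom ≫ s ◁ eps) = (λ_ s).hom ≫ (ρ_ s).inv := by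
      exact
        hW.fac (RightLift.mk (𝟙 a) ((λ_ s).hom ≫ (ρ_ s).inv))
    have left_tri : leftZigzag η eps = (λ_ s).hom ≫ (ρ_ s).inv := by
      simpa [leftZigzag, bicategoricalComp] using Hη
    have key : (ρ_ u).inv ≫ rightZigzag η eps ≫ (λ_ u).hom = 𝟙 u := by
      apply hK.hom_ext
      show _ = (𝟙 u) ▷ s ≫ (eps : u ≫ s ⟶ 𝟙 b)
      rw [id_whiskerRight, Category.id_comp]
      show ((ρ_ u).inv ≫ rightZigzag η eps ≫ (λ_ u).hom) ▷ s ≫ eps = eps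
      calc _
        _ = 𝟙 _ ⊗≫ u ◁ η ▷ s ⊗≫ (eps ▷ (u ≫ s) ≫ 𝟙 b ◁ eps) ⊗≫ 𝟙 _ := by
          rw [rightZigzag]; bicategory
        _ = 𝟙 _ ⊗≫ u ◁ leftZigzag η eps ⊗≫ eps ⊗≫ 𝟙 _ := by
          rw [leftZigzag, ← whisker_exchange]; bicategory
        _ = eps := by rw [left_tri]; bicategory
    have right_tri : rightZigzag η eps = (ρ_ u).hom ≫ (λ_ u).inv := by
      calc rightZigzag η eps
        _ = (ρ_ u).hom ≫ ((ρ_ u).inv ≫ rightZigzag η eps ≫ (λ_ u).hom) ≫ (λ_ u).inv := by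
          simp
        _ = _ := by rw [key]; simp
    exact IsLeftAdjoint.mk ⟨η, eps, left_tri, right_tri⟩
end

section
/- In any bicategory, a 1-cell t : B → A has a left adjoint if and only if the right Kan extension of the identity 1_B along t exists and is preserved by t; in that case the left adjoint is ran_t(1_B). -/
open CategoryTheory Bicategory

universe w v u

variable {B : Type u} [Bicategory.{w, v} B]

/-- Whiskering (post-composing) a right extension of `g` along `f` with a 1-cell `h : c ⟶ x`;
a right extension of `g` along `f` is preserved by `h` when the whiskered extension is again
a right Kan extension. -/
def rightExtensionWhisker {a b c : B} {f : a ⟶ b} {g : a ⟶ c} (e : RightExtension f g)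
    {x : B} (h : c ⟶ x) : RightExtension f (g ≫ h) :=
  RightExtension.mk (e.extension ≫ h) ((α_ f e.extension h).inv ≫ e.counit ▷ h)

section Aux

open CategoryTheory.Limits

variable {a b c : B}

/-- If `l ⊣ t`, then `l ≫ g` is a right Kan extension of `g` along `t`. -/
noncomputable def adjRightKan {l : a ⟶ b} {t : b ⟶ a} (adj : l ⊣ t) (g : b ⟶ c) :
    RightExtension.IsKan (RightExtension.mk (l ≫ g)
      ((α_ t l g).inv ≫ adj.counit ▷ g ≫ (λ_ g).hom)) :=
  IsTerminal.ofUniqueHom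
    (fun s ↦ RightExtension.homMk
      (𝟙 _ ⊗≫ adj.unit ▷ (RightExtension.extension s) ⊗≫ l ◁ (RightExtension.counit s) ⊗≫ 𝟙 _ : (RightExtension.extension s) ⟶ l ≫ g) <| by
      dsimp only [RightExtension.mk, CostructuredArrow.mk_left, CostructuredArrow.mk_hom_eq_self,
        precomp_obj, precomp_map, RightExtension.counit]
      show t ◁ _ ≫ ((α_ t l g).inv ≫ adj.counit ▷ g ≫ (λ_ g).hom) = _
      calc _
        _ = 𝟙 _ ⊗≫ t ◁ adj.unit ▷ (RightExtension.extension s) ⊗≫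
              ((t ≫ l) ◁ (RightExtension.counit s) ≫ adj.counit ▷ g) ⊗≫ 𝟙 _ := by
          bicategory
        _ = 𝟙 _ ⊗≫ rightZigzag adj.unit adj.counit ▷ (RightExtension.extension s) ⊗≫
              𝟙 b ◁ (RightExtension.counit s) ⊗≫ 𝟙 _ := by
          rw [whisker_exchange]; dsimp only [rightZigzag]; bicategory
        _ = (RightExtension.counit s) := by
          rw [adj.right_triangle]; bicategory)
    (fun s τ₀ ↦ by
      let τ : RightExtension.extension s ⟶ l ≫ g := τ₀.left
      have hτ : t ◁ τ ≫ (α_ t l g).inv ≫ adj.counit ▷ g ≫ (λ_ g).hom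
          = RightExtension.counit s := by
        exact RightExtension.w τ₀
      have key : τ = (𝟙 _ ⊗≫ adj.unit ▷ (RightExtension.extension s) ⊗≫
          l ◁ (RightExtension.counit s) ⊗≫ 𝟙 _ :
            RightExtension.extension s ⟶ l ≫ g) := by
        calc τ
          _ = 𝟙 _ ⊗≫ τ ⊗≫ leftZigzag adj.unit adj.counit ▷ g ⊗≫ 𝟙 _ := by
            rw [adj.left_triangle]; bicategory
          _ = 𝟙 _ ⊗≫ (𝟙 a ◁ τ ≫ adj.unit ▷ (l ≫ g)) ⊗≫ l ◁ adj.counit ▷ g ⊗≫ 𝟙 _ := by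
            dsimp only [leftZigzag]; bicategory
          _ = 𝟙 _ ⊗≫ adj.unit ▷ (RightExtension.extension s) ⊗≫
              l ◁ (t ◁ τ ≫ (α_ t l g).inv ≫ adj.counit ▷ g ≫ (λ_ g).hom) ⊗≫ 𝟙 _ := by
            rw [whisker_exchange]; bicategory
          _ = _ := by
            rw [hτ]
      ext
      exact key)

/-- If `l ⊣ t`, then `l` is a right Kan extension of `𝟙 b` along `t`, with the counit of the
adjunction as the counit of the extension. -/
noncomputable def adjRanId {l : a ⟶ b} {t : b ⟶ a} (adj : l ⊣ t) :
    RightExtension.IsKan (RightExtension.mk l adj.counit) :=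
  IsTerminal.ofIso (adjRightKan adj (𝟙 b)) <|
    CostructuredArrow.isoMk (ρ_ l) <| by
      dsimp only [RightExtension.mk, CostructuredArrow.mk_left, CostructuredArrow.mk_hom_eq_self,
        precomp_obj, precomp_map]
      show t ◁ (ρ_ l).hom ≫ adj.counit = (α_ t l (𝟙 b)).inv ≫ adj.counit ▷ 𝟙 b ≫ (λ_ (𝟙 b)).hom
      rw [unitors_equal, rightUnitor_naturality, whiskerLeft_rightUnitor, Category.assoc]

/-- If `l ⊣ t`, then the whiskering by `t` of the extension `(l, adj.counit)` is again
a right Kan extension. -/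
noncomputable def adjRanIdWhisker {l : a ⟶ b} {t : b ⟶ a} (adj : l ⊣ t) :
    RightExtension.IsKan (rightExtensionWhisker (RightExtension.mk l adj.counit) t) :=
  IsTerminal.ofIso (adjRightKan adj (𝟙 b ≫ t)) <|
    CostructuredArrow.isoMk (whiskerLeftIso l (λ_ t)) <| by
      show t ◁ (l ◁ (λ_ t).hom) ≫ ((α_ t l t).inv ≫ adj.counit ▷ t) =
        (α_ t l (𝟙 b ≫ t)).inv ≫ adj.counit ▷ (𝟙 b ≫ t) ≫ (λ_ (𝟙 b ≫ t)).hom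
      calc _
        _ = 𝟙 _ ⊗≫ ((t ≫ l) ◁ (λ_ t).hom ≫ adj.counit ▷ t) ⊗≫ 𝟙 _ := by
          bicategory
        _ = 𝟙 _ ⊗≫ (adj.counit ▷ (𝟙 b ≫ t) ≫ 𝟙 b ◁ (λ_ t).hom) ⊗≫ 𝟙 _ := by
          rw [whisker_exchange]
        _ = _ := by
          bicategory

/-- A right Kan extension of the identity along `t` preserved by `t` gives a left adjoint
of `t`. -/
noncomputable def ranIdAdjunction {t : b ⟶ a} (e : RightExtension t (𝟙 b))
    (H : RightExtension.IsKan e)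
    (H' : RightExtension.IsKan (rightExtensionWhisker e t)) :
    e.extension ⊣ t :=
  let η : 𝟙 a ⟶ e.extension ≫ t :=
    H'.lift (RightExtension.mk (𝟙 a) ((ρ_ t).hom ≫ (λ_ t).inv))
  have Hη : rightZigzag η e.counit = (ρ_ t).hom ≫ (λ_ t).inv := by
    have h := H'.fac (RightExtension.mk (𝟙 a) ((ρ_ t).hom ≫ (λ_ t).inv))
    dsimp only [rightExtensionWhisker, RightExtension.mk, CostructuredArrow.mk_left,
      CostructuredArrow.mk_hom_eq_self, precomp_obj, precomp_map] at h
    dsimp only [rightZigzag, bicategoricalComp]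
    change t ◁ η ≫ (α_ t e.extension t).inv ≫ e.counit ▷ t = (ρ_ t).hom ≫ (λ_ t).inv at h
    simpa using h
  { unit := η
    counit := e.counit
    right_triangle := Hη
    left_triangle := by
      apply (cancel_epi (λ_ _).inv).mp
      apply (cancel_mono (ρ_ _).hom).mp
      apply H.hom_ext
      show t ◁ (((λ_ _).inv ≫ leftZigzag η e.counit) ≫ (ρ_ _).hom) ≫ e.counit = t ◁ (((λ_ _).inv ≫ (λ_ _).hom ≫ (ρ_ _).inv) ≫ (ρ_ _).hom) ≫ e.counit
      calc _
        _ = 𝟙 _ ⊗≫ t ◁ η ▷ e.extension ⊗≫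
              ((t ≫ e.extension) ◁ e.counit ≫ e.counit ▷ 𝟙 b) ⊗≫ 𝟙 _ := by
          dsimp only [leftZigzag]; bicategory
        _ = 𝟙 _ ⊗≫ rightZigzag η e.counit ▷ e.extension ⊗≫ 𝟙 b ◁ e.counit ⊗≫ 𝟙 _ := by
          rw [whisker_exchange]; dsimp only [rightZigzag]; bicategory
        _ = _ := by
          rw [Hη]; bicategory }

end Aux

/-- a 1-cell `t : b ⟶ a` has a left adjoint iff the right Kan extension of the
identity `𝟙 b` along `t` exists and is preserved by `t`; in that case the left adjoint is
`ran_t(𝟙 b)`, i.e. the extension 1-cell itself. -/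
theorem isRightAdjoint_iff_ranIdPreserved {a b : B} (t : b ⟶ a) :
    (IsRightAdjoint t ↔
      ∃ e : RightExtension t (𝟙 b),
        Nonempty (RightExtension.IsKan e) ∧
          Nonempty (RightExtension.IsKan (rightExtensionWhisker e t))) ∧
      (∀ e : RightExtension t (𝟙 b),
        Nonempty (RightExtension.IsKan e) →
          Nonempty (RightExtension.IsKan (rightExtensionWhisker e t)) →
            Nonempty (Adjunction e.extension t)) := by
  constructor
  · constructor
    · rintro ⟨⟨l, adj⟩⟩
      exact ⟨RightExtension.mk l adj.counit, ⟨adjRanId adj⟩, ⟨adjRanIdWhisker adj⟩⟩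
    · rintro ⟨e, ⟨H⟩, ⟨H'⟩⟩
      exact ⟨⟨e.extension, ranIdAdjunction e H H'⟩⟩
  · rintro e ⟨H⟩ ⟨H'⟩
    exact ⟨ranIdAdjunction e H H'⟩
end

section
/- Let Φ be a class of weights and A a category admitting Φ-colimits (Φ-cocomplete). Let A_Φ be the full subcategory of A on objects a such that the corepresentable functor A(a, −) preserves all Φ-colimits existing in A. Then A_Φ is closed in A under Φ⁻-colimits: if ψ : Kᵒᵖ → V is a weight such that ψ-limits commute with all Φ-colimits in V, and S : K → A lands in A_Φ, and the colimit ψ * S exists in A, then ψ * S lies in A_Φ. -/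
open CategoryTheory Opposite

universe v u

section CoendDefs

variable {L : Type v} [SmallCategory L]

/-- Generating relation for the coend `∫^l φ(l) × M(l)`. -/
def coendRel (φ : Lᵒᵖ ⥤ Type v) (M : L ⥤ Type v) :
    (Σ l : L, φ.obj (op l) × M.obj l) → (Σ l : L, φ.obj (op l) × M.obj l) → Prop :=
  fun p q => ∃ (f : p.1 ⟶ q.1) (x : φ.obj (op q.1)) (m : M.obj p.1),
    p.2 = (φ.map f.op x, m) ∧ q.2 = (x, M.map f m)

/-- The coend `∫^l φ(l) × M(l)` in `Type v`, i.e. the `φ`-weighted colimit of `M`. -/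
def Coend (φ : Lᵒᵖ ⥤ Type v) (M : L ⥤ Type v) : Type v :=
  Quot (coendRel φ M)

/-- Canonical injection into the coend. -/
def Coend.mk (φ : Lᵒᵖ ⥤ Type v) (M : L ⥤ Type v) (l : L) (x : φ.obj (op l)) (m : M.obj l) :
    Coend φ M :=
  Quot.mk _ ⟨l, x, m⟩

/-- Functoriality of the coend in the covariant variable. -/
def coendMap (φ : Lᵒᵖ ⥤ Type v) {M M' : L ⥤ Type v} (α : M ⟶ M') : Coend φ M → Coend φ M' :=
  Quot.map (fun p => ⟨p.1, p.2.1, α.app p.1 p.2.2⟩) (by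
    rintro ⟨l, x, m⟩ ⟨l', x', m'⟩ ⟨f, y, n, h1, h2⟩
    simp only [Prod.mk.injEq] at h1 h2
    refine ⟨f, y, α.app l n, ?_, ?_⟩
    · simp only [Prod.mk.injEq]
      exact ⟨h1.1, congrArg (α.app l) h1.2⟩
    · simp only [Prod.mk.injEq]
      refine ⟨h2.1, ?_⟩
      rw [h2.2]
      exact NatTrans.naturality_apply α f n)

/-- The weighted-colimit functor `φ * − : [L, Type v] ⥤ Type v`. -/
def coendFunctor (φ : Lᵒᵖ ⥤ Type v) : (L ⥤ Type v) ⥤ Type v where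
  obj M := Coend φ M
  map α := TypeCat.ofHom (coendMap φ α)
  map_id M := by
    ext q
    induction q using Quot.ind
    rfl
  map_comp α β := by
    ext q
    induction q using Quot.ind
    rfl

end CoendDefs

section Cmp

variable {K L : Type v} [SmallCategory K] [SmallCategory L]

/-- The canonical comparison `φ * {ψ, S} ⟶ {ψ, φ * S}` in `Type v`, from the `φ`-weighted
colimit of the `ψ`-weighted limits to the `ψ`-weighted limit of the `φ`-weighted colimits. -/
def wcmp (ψ : K ⥤ Type v) (φ : Lᵒᵖ ⥤ Type v) (S : K ⥤ L ⥤ Type v) :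
    Coend φ (S.flip ⋙ coyoneda.obj (op ψ)) → (ψ ⟶ S ⋙ coendFunctor φ) :=
  Quot.lift
    (fun p =>
      { app := fun k => TypeCat.ofHom fun y => Coend.mk φ (S.obj k) p.1 p.2.1 ((p.2.2 : ψ ⟶ S.flip.obj p.1).app k y)
        naturality := by
          intro k k' f
          ext y
          have h := NatTrans.naturality_apply (p.2.2 : ψ ⟶ S.flip.obj p.1) f y
          exact congrArg (Coend.mk φ (S.obj k') p.1 p.2.1) h })
    (by
      rintro ⟨l, x, η⟩ ⟨l', x', η'⟩ ⟨f, y, n, h1, h2⟩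
      simp only [Prod.mk.injEq] at h1 h2
      ext k z
      apply Quot.sound
      refine ⟨f, y, n.app k z, ?_, ?_⟩
      · simp only [Prod.mk.injEq]
        exact ⟨h1.1, by rw [h1.2]⟩
      · simp only [Prod.mk.injEq]
        exact ⟨h2.1, by rw [h2.2]; rfl⟩)

/-- The canonical comparison in the other presentation: from the `φ`-weighted colimit of
`Hom(ψ, U−)` to `Hom(ψ, −)` of the (pointwise) `φ`-weighted colimit of `U`. -/
def wcmp₂ (ψ : K ⥤ Type v) (φ : Lᵒᵖ ⥤ Type v) (U : L ⥤ K ⥤ Type v) :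
    Coend φ (U ⋙ coyoneda.obj (op ψ)) → (ψ ⟶ U.flip ⋙ coendFunctor φ) :=
  Quot.lift
    (fun p =>
      { app := fun k => TypeCat.ofHom fun y => Coend.mk φ (U.flip.obj k) p.1 p.2.1 ((p.2.2 : ψ ⟶ U.obj p.1).app k y)
        naturality := by
          intro k k' f
          ext y
          have h := NatTrans.naturality_apply (p.2.2 : ψ ⟶ U.obj p.1) f y
          exact congrArg (Coend.mk φ (U.flip.obj k') p.1 p.2.1) h })
    (by
      rintro ⟨l, x, η⟩ ⟨l', x', η'⟩ ⟨f, y, n, h1, h2⟩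
      simp only [Prod.mk.injEq] at h1 h2
      ext k z
      apply Quot.sound
      refine ⟨f, y, n.app k z, ?_, ?_⟩
      · simp only [Prod.mk.injEq]
        exact ⟨h1.1, by rw [h1.2]⟩
      · simp only [Prod.mk.injEq]
        exact ⟨h2.1, by rw [h2.2]; rfl⟩)

end Cmp

section WColim

variable {K : Type v} [SmallCategory K] {A : Type u} [Category.{v} A]

/-- `c` is the `φ`-weighted colimit of `S : K ⥤ A`: maps out of `c` correspond, naturally,
to natural transformations `φ ⟶ A(S−, a)`. -/
structure IsWColimit (φ : Kᵒᵖ ⥤ Type v) (S : K ⥤ A) (c : A) where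
  e : ∀ a : A, (c ⟶ a) ≃ (φ ⟶ S.op ⋙ yoneda.obj a)
  nat : ∀ {a a' : A} (f : a ⟶ a') (u : c ⟶ a),
    e a' (u ≫ f) = e a u ≫ Functor.whiskerLeft S.op (yoneda.map f)

/-- The canonical comparison map from the `φ`-weighted colimit of `S ⋙ F` in `Type v` to the
image under `F` of the `φ`-weighted colimit of `S`; `F` preserves the weighted colimit exactly
when this map is bijective. -/
def wcCompare (φ : Kᵒᵖ ⥤ Type v) (S : K ⥤ A) (c : A) (w : IsWColimit φ S c)
    (F : A ⥤ Type v) : Coend φ (S ⋙ F) → F.obj c :=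
  Quot.lift
    (fun p => F.map ((w.e c (𝟙 c)).app (op p.1) p.2.1) p.2.2)
    (by
      rintro ⟨l, x, m⟩ ⟨l', x', m'⟩ ⟨f, y, n, h1, h2⟩
      simp only [Prod.mk.injEq] at h1 h2
      obtain ⟨hx, hm⟩ := h1
      obtain ⟨hx', hm'⟩ := h2
      rw [hx, hm, hx', hm']
      dsimp only
      have h := NatTrans.naturality_apply (w.e c (𝟙 c)) f.op y
      rw [h]
      dsimp
      rw [FunctorToTypes.map_comp_apply])

end WColim

section Aux
variable {K L : Type v} [SmallCategory K] [SmallCategory L]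
variable {A : Type u} [Category.{v} A]

/-- Transport a weighted colimit along an isomorphism of the colimit object. -/
def IsWColimit.ofIso {φ : Kᵒᵖ ⥤ Type v} {S : K ⥤ A} {c c2 : A}
    (w : IsWColimit φ S c) (θ : c ≅ c2) : IsWColimit φ S c2 where
  e a :=
    { toFun := fun u => w.e a (θ.hom ≫ u)
      invFun := fun η => θ.inv ≫ (w.e a).symm η
      left_inv := fun u => by simp
      right_inv := fun η => by simp }
  nat f u := by
    dsimp
    rw [← Category.assoc, w.nat]

/-- The pointwise coend is the weighted colimit in a presheaf category. -/
def isWColimitCoend (φ : Lᵒᵖ ⥤ Type v) (E : L ⥤ (Kᵒᵖ ⥤ Type v)) :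
    IsWColimit φ E (E.flip ⋙ coendFunctor φ) where
  e Q :=
    { toFun := fun u =>
        { app := fun l => TypeCat.ofHom fun x =>
            { app := fun k => TypeCat.ofHom fun m => u.app k (Coend.mk φ (E.flip.obj k) l.unop x m)
              naturality := by
                intro k k' κ
                ext m
                exact NatTrans.naturality_apply u κ (Coend.mk φ (E.flip.obj k) l.unop x m) }
          naturality := by
            intro l l' f
            apply ConcreteCategory.hom_ext
            intro x
            apply NatTrans.ext
            funext k
            ext m
            exact congrArg (u.app k) (Quot.sound ⟨f.unop, x, m, rfl, rfl⟩) }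
      invFun := fun η =>
        { app := fun k => TypeCat.ofHom (Quot.lift (fun p => (η.app (op p.1) p.2.1).app k p.2.2) (by
            rintro ⟨l, x, m⟩ ⟨l', x', m'⟩ ⟨f, y, n, h1, h2⟩
            simp only [Prod.mk.injEq] at h1 h2
            obtain ⟨hx, hm⟩ := h1
            obtain ⟨hx', hm'⟩ := h2
            rw [hx, hm, hx', hm']
            dsimp only
            have h := NatTrans.naturality_apply η f.op y
            rw [h]
            rfl))
          naturality := by
            intro k k' κ
            ext q
            induction q using Quot.ind with
            | _ p =>
              obtain ⟨l, x, m⟩ := p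
              exact NatTrans.naturality_apply (η.app (op l) x) κ m }
      left_inv := fun u => by
        apply NatTrans.ext
        funext k
        ext q
        induction q using Quot.ind with
        | _ p => rfl
      right_inv := fun η => rfl }
  nat f u := rfl

end Aux

/-- let `Φ` be a class of weights and `A` a `Φ`-cocomplete category. If `ψ` is a
weight whose limits commute in `Type v` with all `Φ`-colimits, `S : K ⥤ A` takes values in the
full subcategory `A_Φ` of objects whose covariant hom-functor preserves `Φ`-colimits, and the
weighted colimit `ψ * S` exists (with colimit object `c`), then `c` lies in `A_Φ`. -/
theorem atoms_closed_under_minus_colimits {A : Type u} [Category.{v} A]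
    (Φ : ∀ (L : Type v) [SmallCategory L], (Lᵒᵖ ⥤ Type v) → Prop)
    (hA : ∀ (L : Type v) [SmallCategory L] (φ : Lᵒᵖ ⥤ Type v), Φ L φ →
      ∀ D : L ⥤ A, ∃ c : A, Nonempty (IsWColimit φ D c))
    {K : Type v} [SmallCategory K] (ψ : Kᵒᵖ ⥤ Type v)
    (hψ : ∀ (L : Type v) [SmallCategory L] (φ : Lᵒᵖ ⥤ Type v), Φ L φ →
      ∀ (D : L ⥤ (Kᵒᵖ ⥤ Type v)) (c : Kᵒᵖ ⥤ Type v) (w : IsWColimit φ D c),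
        Function.Bijective (wcCompare φ D c w (coyoneda.obj (Opposite.op ψ))))
    (S : K ⥤ A)
    (hS : ∀ (k : K) (L : Type v) [SmallCategory L] (φ : Lᵒᵖ ⥤ Type v), Φ L φ →
      ∀ (D : L ⥤ A) (c : A) (w : IsWColimit φ D c),
        Function.Bijective (wcCompare φ D c w (coyoneda.obj (Opposite.op (S.obj k)))))
    (c : A) (w : IsWColimit ψ S c) :
    ∀ (L : Type v) [SmallCategory L] (φ : Lᵒᵖ ⥤ Type v), Φ L φ →
      ∀ (D : L ⥤ A) (c' : A) (w' : IsWColimit φ D c'),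
        Function.Bijective (wcCompare φ D c' w' (coyoneda.obj (Opposite.op c))) := by
  intro L _ φ hφ D c' w'
  classical
  let H : A ⥤ (Kᵒᵖ ⥤ Type v) :=
    { obj := fun a => S.op ⋙ yoneda.obj a
      map := fun f => Functor.whiskerLeft S.op (yoneda.map f) }
  let E : L ⥤ (Kᵒᵖ ⥤ Type v) := D ⋙ H
  have hbij : ∀ k : K, Function.Bijective
      (wcCompare φ D c' w' (coyoneda.obj (op (S.obj k)))) :=
    fun k => hS k L φ hφ D c' w'
  let θ : (E.flip ⋙ coendFunctor φ) ≅ H.obj c' :=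
    NatIso.ofComponents
      (fun k => (Equiv.ofBijective _ (hbij k.unop)).toIso)
      (by
        intro k k' κ
        ext q
        induction q using Quot.ind with
        | _ p =>
          obtain ⟨l, x, m⟩ := p
          show ((E.obj l).map κ m) ≫ (w'.e c' (𝟙 c')).app (op l) x
              = S.map κ.unop ≫ m ≫ (w'.e c' (𝟙 c')).app (op l) x
          dsimp [E, H]
          rw [Category.assoc])
  let w2 : IsWColimit φ E (H.obj c') := (isWColimitCoend φ E).ofIso θ
  have hψbij := hψ L φ hφ E (H.obj c') w2
  let α : (D ⋙ coyoneda.obj (op c)) ≅ (E ⋙ coyoneda.obj (op ψ)) :=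
    NatIso.ofComponents (fun l => (w.e (D.obj l)).toIso)
      (by
        intro l l' f
        ext g
        exact w.nat (D.map f) g)
  have key : wcCompare φ D c' w' (coyoneda.obj (op c)) =
      ((w.e c').symm ∘ wcCompare φ E (H.obj c') w2 (coyoneda.obj (op ψ))) ∘
        coendMap φ α.hom := by
    funext q
    induction q using Quot.ind with
    | _ p =>
      obtain ⟨l, x, g⟩ := p
      have hμ : (w2.e (H.obj c') (𝟙 (H.obj c'))).app (op l) x
          = H.map ((w'.e c' (𝟙 c')).app (op l) x) := rfl
      show (coyoneda.obj (op c)).map ((w'.e c' (𝟙 c')).app (op l) x) g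
          = (w.e c').symm ((coyoneda.obj (op ψ)).map
              ((w2.e (H.obj c') (𝟙 (H.obj c'))).app (op l) x) (w.e (D.obj l) g))
      rw [hμ]
      show g ≫ (w'.e c' (𝟙 c')).app (op l) x
          = (w.e c').symm (w.e (D.obj l) g ≫
              Functor.whiskerLeft S.op (yoneda.map ((w'.e c' (𝟙 c')).app (op l) x)))
      have hn : w.e (D.obj l) g ≫
            Functor.whiskerLeft S.op (yoneda.map ((w'.e c' (𝟙 c')).app (op l) x))
          = w.e c' (g ≫ (w'.e c' (𝟙 c')).app (op l) x) := (w.nat _ g).symm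
      rw [hn]
      exact (Equiv.symm_apply_apply _ _).symm
  rw [key]
  exact (((w.e c').symm.bijective.comp hψbij).comp
    (Iso.toEquiv ((coendFunctor φ).mapIso α)).bijective)
end

section
/- Let B be a small category. For any presheaf F : Bᵒᵖ → Type*, the following are equivalent: (i) the corresponding profunctor (module) from the unit category to B has a right adjoint in the bicategory of profunctors; (ii) the representable functor Hom(F, −) : [Bᵒᵖ, Type*] → Type* preserves all small colimits; and when these hold, the right adjoint module is given by b ↦ Hom_{[Bᵒᵖ,Type*]}(F, Yb), where Y is the Yoneda embedding. -/
open CategoryTheory Opposite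

universe v u u'

variable {B : Type v} [SmallCategory B]

/-- Pushing a cocone over `K ⋙ T` along a natural transformation `β : S ⟶ T`. -/
@[simps]
def myPushCocone {C : Type*} [Category C] {D : Type*} [Category D] {J : Type*} [Category J]
    {T S : C ⥤ D} (β : S ⟶ T) {K : J ⥤ C} (s : Limits.Cocone (K ⋙ T)) :
    Limits.Cocone (K ⋙ S) where
  pt := s.pt
  ι := { app := fun j => β.app (K.obj j) ≫ s.ι.app j
         naturality := by
           intro j j' f
           have := s.ι.naturality f
           simp only [Functor.comp_obj, Functor.comp_map, Functor.const_obj_obj,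
             Functor.const_obj_map, Category.comp_id] at this ⊢
           rw [NatTrans.naturality_assoc, this] }

/-- A retract of a colimit-preserving functor preserves colimits. -/
theorem myRetractPreserves {C : Type*} [Category C] {D : Type*} [Category D]
    (T S : C ⥤ D) (α : T ⟶ S) (β : S ⟶ T) (hαβ : α ≫ β = 𝟙 T)
    [Limits.PreservesColimits S] : Limits.PreservesColimits T := by
  constructor
  intro J _
  constructor
  intro K
  constructor
  intro c hc
  obtain ⟨hS⟩ := Limits.PreservesColimit.preserves (F := S) hc
  refine ⟨Limits.IsColimit.mk
    (fun s => α.app c.pt ≫ hS.desc (myPushCocone β s)) ?_ ?_⟩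
  · intro s j
    have hnat : α.app (K.obj j) ≫ S.map (c.ι.app j) = T.map (c.ι.app j) ≫ α.app c.pt :=
      (α.naturality (c.ι.app j)).symm
    have := hS.fac (myPushCocone β s) j
    simp only [Functor.mapCocone_pt, Functor.mapCocone_ι_app, myPushCocone_pt,
      myPushCocone_ι_app] at this ⊢
    erw [← Category.assoc, ← hnat, Category.assoc, this, ← Category.assoc,
      ← NatTrans.comp_app, hαβ]
    simp
  · intro s m hm
    simp only [Functor.mapCocone_ι_app] at hm
    have hβm : β.app c.pt ≫ m = hS.desc (myPushCocone β s) := by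
      apply hS.uniq (myPushCocone β s) (β.app c.pt ≫ m)
      intro j
      simp only [Functor.mapCocone_pt, Functor.mapCocone_ι_app, myPushCocone_pt,
        myPushCocone_ι_app]
      erw [← Category.assoc, β.naturality, Category.assoc, hm j]
      rfl
    erw [← hβm, ← Category.assoc, ← NatTrans.comp_app, hαβ]
    simp

/-- An adjunction `f ⊣ g` in the bicategory of `Type v`-valued profunctors, where
`f : 𝟙 ⇸ B` corresponds to the presheaf `F : Bᵒᵖ ⥤ Type v` and `g : B ⇸ 𝟙` corresponds to
the copresheaf `G : B ⥤ Type v`.  The counit `f ∘ g ⟶ 1_B` is a natural family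
`ε : F(b') × G(b) → B(b', b)`, and the unit `1_𝟙 ⟶ g ∘ f` is an element of the coend
`∫^b G(b) × F(b)`, given by a representative `(b₀, g₀, x₀)`; the two triangle identities are
`tri₁` and `tri₂`. -/
structure ProfAdj (F : Bᵒᵖ ⥤ Type v) (G : B ⥤ Type v) where
  ε : ∀ {b b' : B}, F.obj (op b') → G.obj b → (b' ⟶ b)
  ε_natl : ∀ {b b' b'' : B} (h : b'' ⟶ b') (x : F.obj (op b')) (y : G.obj b),
    ε (F.map h.op x) y = h ≫ ε x y
  ε_natr : ∀ {b b' b'' : B} (k : b ⟶ b'') (x : F.obj (op b')) (y : G.obj b),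
    ε x (G.map k y) = ε x y ≫ k
  b₀ : B
  g₀ : G.obj b₀
  x₀ : F.obj (op b₀)
  tri₁ : ∀ (b : B) (x : F.obj (op b)), F.map (ε x g₀).op x₀ = x
  tri₂ : ∀ (b : B) (y : G.obj b), G.map (ε x₀ y) g₀ = y

section Aux

variable {F : Bᵒᵖ ⥤ Type v} {G : B ⥤ Type v}

/-- The section `F ⟶ yoneda.obj A.b₀` extracted from a profunctor adjunction. -/
@[simps]
def profPhi (A : ProfAdj F G) : F ⟶ yoneda.obj A.b₀ where
  app bop := TypeCat.ofHom fun x => A.ε (b' := unop bop) x A.g₀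
  naturality := by
    intro X Y f
    ext x
    have := A.ε_natl f.unop x A.g₀
    simpa using this

/-- The retraction `yoneda.obj A.b₀ ⟶ F` extracted from a profunctor adjunction. -/
@[simps]
def profPsi (A : ProfAdj F G) : yoneda.obj A.b₀ ⟶ F where
  app bop := TypeCat.ofHom fun (h : unop bop ⟶ A.b₀) => F.map h.op A.x₀
  naturality := by
    intro X Y f
    ext h
    simp only [yoneda_obj_obj, types_comp_apply, yoneda_obj_map]
    simp
  
theorem profPhiPsi (A : ProfAdj F G) : profPhi A ≫ profPsi A = 𝟙 F := by
  ext bop x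
  exact A.tri₁ (unop bop) x

/-- `ProfAdj` gives colimit preservation, via retract of a representable. -/
noncomputable def profPreserves (A : ProfAdj F G) :
    Limits.PreservesColimits (coyoneda.obj (op F)) := by
  have : Limits.PreservesColimits (coyoneda.obj (op (yoneda.obj A.b₀))) :=
    Limits.preservesColimits_of_natIso (curriedYonedaLemma.app (op A.b₀)).symm
  exact myRetractPreserves _ (coyoneda.obj (op (yoneda.obj A.b₀)))
    (coyoneda.map (Quiver.Hom.op (profPsi A))) (coyoneda.map (Quiver.Hom.op (profPhi A)))
    (by rw [← coyoneda.map_comp, ← op_comp, profPhiPsi A]; rfl)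

end Aux

/-- for a presheaf `F : Bᵒᵖ ⥤ Type v` on a small category, the corresponding
profunctor `𝟙 ⇸ B` has a right adjoint iff the representable functor
`Hom(F, −) : [Bᵒᵖ, Type v] ⥤ Type v` preserves all small colimits; and when these hold, the
right adjoint module is `b ↦ Hom(F, Yb)`. -/
theorem profunctor_rightAdjoint_iff_homPreservesColimits (F : Bᵒᵖ ⥤ Type v) :
    ((∃ G : B ⥤ Type v, Nonempty (ProfAdj F G)) ↔
        Nonempty (Limits.PreservesColimits (coyoneda.obj (op F)))) ∧
      (∀ G : B ⥤ Type v, ProfAdj F G →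
        Nonempty (G ≅ yoneda ⋙ coyoneda.obj (op F))) := by
  constructor
  · constructor
    · rintro ⟨G, ⟨A⟩⟩
      exact ⟨profPreserves A⟩
    · rintro ⟨hP⟩
      refine ⟨yoneda ⋙ coyoneda.obj (op F), ?_⟩
      have t := Presheaf.isColimitTautologicalCocone F
      obtain ⟨ht⟩ := Limits.PreservesColimit.preserves (F := coyoneda.obj (op F)) t
      obtain ⟨X, φ, hφ⟩ := Limits.Types.jointly_surjective _ ht (𝟙 F)
      -- `φ : F ⟶ yoneda.obj X.left`, and `φ ≫ X.hom = 𝟙 F`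
      have hφ' : φ ≫ X.hom = 𝟙 F := hφ
      have hXapp : ∀ (b : B) (f : b ⟶ X.left),
          X.hom.app (op b) f = F.map f.op (X.hom.app (op X.left) (𝟙 X.left)) := by
        intro b f
        have := ConcreteCategory.congr_hom (X.hom.naturality f.op) (𝟙 X.left)
        simpa using this
      have htri : ∀ (b : B) (x : F.obj (op b)),
          F.map (φ.app (op b) x).op (X.hom.app (op X.left) (𝟙 X.left)) = x := by
        intro b x
        erw [← hXapp]
        exact ConcreteCategory.congr_hom (congrFun (congrArg NatTrans.app hφ') (op b)) x
      refine ⟨{ ε := (fun {b b'} x y => y.app (op b') x),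
                 ε_natl := ?_,
                 ε_natr := ?_,
                 b₀ := X.left,
                 g₀ := φ,
                 x₀ := X.hom.app (op X.left) (𝟙 X.left),
                 tri₁ := htri,
                 tri₂ := ?_ }⟩
      · intro b b' b'' h x y
        exact ConcreteCategory.congr_hom (y.naturality h.op) x
      · intro b b' b'' k x y
        rfl
      · intro b y
        apply NatTrans.ext
        funext bop; ext x
        have h1 : x = F.map (φ.app bop x).op (X.hom.app (op X.left) (𝟙 X.left)) :=
          (htri (unop bop) x).symm
        have h2 := ConcreteCategory.congr_hom (y.naturality (φ.app bop x).op) (X.hom.app (op X.left) (𝟙 X.left))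
        simp only [Functor.comp_obj, Functor.comp_map]
        conv_rhs => rw [h1]
        exact h2.symm
  · intro G A
    refine ⟨NatIso.ofComponents (fun b => ?_) ?_⟩
    · refine { hom := TypeCat.ofHom (fun y => { app := (fun bop => TypeCat.ofHom fun x => A.ε (b' := unop bop) x y),
                                                naturality := ?_ }),
               inv := TypeCat.ofHom (fun ψ : (yoneda ⋙ coyoneda.obj (op F)).obj b => G.map (ψ.app (op A.b₀) A.x₀) A.g₀),
               hom_inv_id := ?_,
               inv_hom_id := ?_ }
      · intro X Y f
        ext x
        simpa using A.ε_natl f.unop x y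
      · ext y
        exact A.tri₂ b y
      · ext ψ
        apply NatTrans.ext
        funext bop; ext x
        have h1 := A.ε_natr (ψ.app (op A.b₀) A.x₀) (b' := unop bop) x A.g₀
        have h2 : x = F.map (A.ε x A.g₀).op A.x₀ := (A.tri₁ (unop bop) x).symm
        have h3 := ConcreteCategory.congr_hom (ψ.naturality (A.ε x A.g₀).op) A.x₀
        show A.ε x (G.map (ψ.app (op A.b₀) A.x₀) A.g₀) = ψ.app bop x
        rw [h1]
        conv_rhs => rw [h2]
        simpa using h3.symm
    · intro b b'' k
      ext y
      apply NatTrans.ext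
      funext bop; ext x
      exact A.ε_natr k x y
end

section
/- Let B be a small category and G : B → Type*. If G is a weight for absolute colimits (i.e., every G-weighted colimit in every category is preserved by every functor), then the corresponding profunctor g : B ⇸ 1 has a left adjoint in the bicategory of profunctors, given by b ↦ Hom_{[B,Type*]}(G, coYoneda(b)) where coYoneda(b) = B(b, −). -/
open CategoryTheory Opposite

universe v u u'

variable {B : Type v} [SmallCategory B]

section WColim

variable {A : Type u} [Category.{v} A] {C : Type u'} [Category.{v} C]

/-- `c` is the `G`-weighted colimit of `S : Bᵒᵖ ⥤ A` (for a covariant weight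
`G : B ⥤ Type v`): maps out of `c` correspond, naturally, to natural transformations
`G ⟶ A(S−, a)`. -/
structure WColim (G : B ⥤ Type v) (S : Bᵒᵖ ⥤ A) (c : A) where
  e : ∀ a : A, (c ⟶ a) ≃ (G ⟶ S.rightOp ⋙ yoneda.obj a)
  nat : ∀ {a a' : A} (f : a ⟶ a') (u : c ⟶ a),
    e a' (u ≫ f) = e a u ≫ Functor.whiskerLeft S.rightOp (yoneda.map f)

/-- The image under a functor `T : A ⥤ C` of a weighted colimit cocone. -/
def unitImage (G : B ⥤ Type v) (S : Bᵒᵖ ⥤ A) (c : A) (T : A ⥤ C)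
    (η : G ⟶ S.rightOp ⋙ yoneda.obj c) :
    G ⟶ (S ⋙ T).rightOp ⋙ yoneda.obj (T.obj c) where
  app b := TypeCat.ofHom fun g => T.map (η.app b g)
  naturality := by
    intro b b' f
    ext g
    have h := NatTrans.naturality_apply η f g
    dsimp at h ⊢
    rw [h, T.map_comp]

end WColim

namespace AbsProof

variable {B : Type v} [SmallCategory B]

lemma tHomExt {X Y : Type v} {f g : X ⟶ Y} (h : ∀ x, f x = g x) : f = g :=
  ConcreteCategory.hom_ext _ _ h

/-- A formal letter: an arrow of `B` together with its endpoints. -/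
structure Letter (B : Type v) [SmallCategory B] : Type v where
  src : B
  tgt : B
  hom : src ⟶ tgt

namespace Letter

/-- A letter is an identity letter if its endpoints agree and its arrow is the identity. -/
def isId (l : Letter B) : Prop := ∃ h : l.src = l.tgt, l.hom = eqToHom h

lemma isId_mk_id (a : B) : (⟨a, a, 𝟙 a⟩ : Letter B).isId := ⟨rfl, by simp⟩

lemma isId_iff {s : B} (f : s ⟶ s) : (⟨s, s, f⟩ : Letter B).isId ↔ f = 𝟙 s := by
  constructor
  · rintro ⟨h, e⟩; simpa using e
  · rintro rfl; exact isId_mk_id s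

end Letter

open Letter

open Classical in
/-- Insert a letter at the left end of a (normal) word, merging and cancelling. -/
noncomputable def ins (l : Letter B) : List (Letter B) → List (Letter B)
  | [] => if l.isId then [] else [l]
  | m :: ms =>
      if l.isId then m :: ms
      else if h : l.tgt = m.src then
        if (⟨l.src, m.tgt, l.hom ≫ eqToHom h ≫ m.hom⟩ : Letter B).isId then ms
        else ⟨l.src, m.tgt, l.hom ≫ eqToHom h ≫ m.hom⟩ :: ms
      else l :: m :: ms

/-- Normalization of a word. -/
noncomputable def nf (ms : List (Letter B)) : List (Letter B) := ms.foldr ins []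

open Classical in
/-- Insert a letter at the right end of a (normal) word. -/
noncomputable def insR (l : Letter B) : List (Letter B) → List (Letter B)
  | [] => if l.isId then [] else [l]
  | [m] =>
      if l.isId then [m]
      else if h : m.tgt = l.src then
        if (⟨m.src, l.tgt, m.hom ≫ eqToHom h ≫ l.hom⟩ : Letter B).isId then []
        else [⟨m.src, l.tgt, m.hom ≫ eqToHom h ≫ l.hom⟩]
      else [m, l]
  | m :: m' :: ms => if l.isId then m :: m' :: ms else m :: insR l (m' :: ms)

/-- Normal words: no identity letters, no adjacent composable pair. -/
inductive Normal : List (Letter B) → Prop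
  | nil : Normal []
  | single {l : Letter B} (h : ¬ l.isId) : Normal [l]
  | cons {l m : Letter B} {ms : List (Letter B)} (h : ¬ l.isId) (hnc : l.tgt ≠ m.src)
      (hN : Normal (m :: ms)) : Normal (l :: m :: ms)

lemma Normal.tail {l : Letter B} {ms : List (Letter B)} (h : Normal (l :: ms)) : Normal ms := by
  cases h with
  | single _ => exact Normal.nil
  | cons _ _ hN => exact hN

/-- States for right-to-left consumption. -/
abbrev St (y : B) : Type v := Option (Σ c : B, c ⟶ y)

open Classical in
noncomputable def step {y : B} (l : Letter B) : St y → St y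
  | none => none
  | some ⟨c, u⟩ =>
      if l.isId then some ⟨c, u⟩
      else if h : l.tgt = c then some ⟨l.src, l.hom ≫ eqToHom h ≫ u⟩ else none

noncomputable def consume {y : B} (t : List (Letter B)) (st : St y) : St y := t.foldr step st

/-- Raw data for the presheaf `P`. -/
abbrev PRaw (y : B) : Type v := Σ c : B, List (Letter B) × (c ⟶ y)

open Classical in
/-- Pop the last letter of a word into the hom-slot if it matches. -/
noncomputable def popOne {y : B} : (t : List (Letter B)) → (c : B) → (c ⟶ y) → PRaw y
  | [], c, u => ⟨c, [], u⟩
  | [l], c, u =>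
      if h : l.tgt = c then ⟨l.src, [], l.hom ≫ eqToHom h ≫ u⟩ else ⟨c, [l], u⟩
  | l :: l' :: ms, c, u =>
      ⟨(popOne (l' :: ms) c u).1, l :: (popOne (l' :: ms) c u).2.1, (popOne (l' :: ms) c u).2.2⟩


section Lemmas

lemma normal_ins (l : Letter B) {t : List (Letter B)} (h : Normal t) : Normal (ins l t) := by
  by_cases hl : l.isId
  · cases t with
    | nil => simpa [ins, hl] using h
    | cons m ms => simpa [ins, hl] using h
  · cases t with
    | nil => simpa [ins, hl] using Normal.single hl
    | cons m ms =>
      by_cases hc : l.tgt = m.src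
      · by_cases hid : (⟨l.src, m.tgt, l.hom ≫ eqToHom hc ≫ m.hom⟩ : Letter B).isId
        · simpa [ins, hl, hc, hid] using h.tail
        · simp only [ins, hl, if_false, hc, dif_pos, hid, ite_false]
          cases h with
          | single hm => exact Normal.single hid
          | cons hm hnc hN => exact Normal.cons hid hnc hN
      · simp only [ins, hl, if_false, hc, dif_neg, not_false_iff]
        cases h with
        | single hm => exact Normal.cons hl hc (Normal.single hm)
        | cons hm hnc hN => exact Normal.cons hl hc (Normal.cons hm hnc hN)

lemma normal_nf (ms : List (Letter B)) : Normal (nf ms) := by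
  induction ms with
  | nil => exact Normal.nil
  | cons l ms ih => exact normal_ins l ih

lemma nf_append (xs ys : List (Letter B)) :
    nf (xs ++ ys) = xs.foldr ins (nf ys) := List.foldr_append ..

end Lemmas





section InsIns

lemma letter_hom_congr {a c : B} {x z : a ⟶ c} (h : x = z) :
    (⟨a, c, x⟩ : Letter B) = ⟨a, c, z⟩ := by rw [h]

lemma ins_of_isId {l : Letter B} (h : l.isId) (t : List (Letter B)) : ins l t = t := by
  cases t <;> simp [ins, h]

lemma ins_id (a : B) (t : List (Letter B)) : ins (⟨a, a, 𝟙 a⟩ : Letter B) t = t :=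
  ins_of_isId (Letter.isId_mk_id a) t

lemma ins_of_not_isId_nil {l : Letter B} (hl : ¬ l.isId) : ins l [] = [l] := by
  simp [ins, hl]

open Classical in
lemma ins_of_merge {a c : B} (f : a ⟶ c) (hl : ¬ (⟨a, c, f⟩ : Letter B).isId)
    {m : Letter B} (h : c = m.src) (ms : List (Letter B)) :
    ins ⟨a, c, f⟩ (m :: ms) =
      if (⟨a, m.tgt, f ≫ eqToHom h ≫ m.hom⟩ : Letter B).isId then ms
      else ⟨a, m.tgt, f ≫ eqToHom h ≫ m.hom⟩ :: ms := by
  simp only [ins, hl, if_false, ite_false]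
  rw [dif_pos h]

lemma ins_of_no_merge {l : Letter B} (hl : ¬ l.isId) {m : Letter B} (h : ¬ (l.tgt = m.src))
    (ms : List (Letter B)) : ins l (m :: ms) = l :: m :: ms := by
  simp only [ins, hl, if_false, ite_false]
  rw [dif_neg h]

lemma Normal.head_not_isId {m : Letter B} {ms : List (Letter B)} (h : Normal (m :: ms)) :
    ¬ m.isId := by
  cases h with
  | single h => exact h
  | cons h _ _ => exact h

/-- if `l` has the same target as `m` and `m :: ms` is normal, inserting `l` into `ms`
just conses. -/
lemma ins_eq_cons_aux {l m : Letter B} {ms : List (Letter B)} (hl : ¬ l.isId)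
    (ht : l.tgt = m.tgt) (h : Normal (m :: ms)) : ins l ms = l :: ms := by
  cases h with
  | single _ => exact ins_of_not_isId_nil hl
  | cons _ hnc _ => exact ins_of_no_merge hl (fun hh => hnc (ht ▸ hh)) _

lemma ins_ins {a b d : B} (f : a ⟶ b) (g : b ⟶ d) {t : List (Letter B)} (hN : Normal t) :
    ins ⟨a, b, f⟩ (ins ⟨b, d, g⟩ t) = ins ⟨a, d, f ≫ g⟩ t := by
  by_cases hg : (⟨b, d, g⟩ : Letter B).isId
  · obtain ⟨h, e⟩ := hg
    dsimp only at h e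
    subst h
    have hg' : g = 𝟙 b := by simpa using e
    subst hg'
    rw [ins_id, letter_hom_congr (show f ≫ 𝟙 b = f by simp)]
  · by_cases hf : (⟨a, b, f⟩ : Letter B).isId
    · obtain ⟨h, e⟩ := hf
      dsimp only at h e
      subst h
      have hf' : f = 𝟙 a := by simpa using e
      subst hf'
      rw [ins_of_isId (Letter.isId_mk_id a), letter_hom_congr (show 𝟙 a ≫ g = g by simp)]
    · cases t with
      | nil =>
        rw [ins_of_not_isId_nil hg, ins_of_merge f hf rfl,
          letter_hom_congr (show f ≫ eqToHom rfl ≫ g = f ≫ g by simp)]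
        simp [ins]
      | cons m ms =>
        obtain ⟨msrc, mtgt, mhom⟩ := m
        by_cases hgm : d = msrc
        · subst hgm
          rw [ins_of_merge g hg rfl ms]
          by_cases hX : (⟨b, mtgt, g ≫ eqToHom rfl ≫ mhom⟩ : Letter B).isId
          · -- `g` cancels against `m`
            rw [if_pos hX]
            obtain ⟨h2, e2⟩ := hX
            dsimp only at h2 e2
            subst h2
            have e2' : g ≫ mhom = 𝟙 b := by simpa using e2
            by_cases hfg : (⟨a, d, f ≫ g⟩ : Letter B).isId
            · -- f ≫ g is an identity
              obtain ⟨h3, e3⟩ := hfg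
              dsimp only at h3 e3
              subst h3
              have e3' : f ≫ g = 𝟙 a := by simpa using e3
              have hm : (⟨a, b, mhom⟩ : Letter B) = ⟨a, b, f⟩ := by
                apply letter_hom_congr
                calc mhom = 𝟙 a ≫ mhom := by simp
                _ = (f ≫ g) ≫ mhom := by rw [e3']
                _ = f ≫ (g ≫ mhom) := by simp
                _ = f := by rw [e2']; simp
              rw [ins_of_isId (l := ⟨a, a, f ≫ g⟩) ⟨rfl, by simpa using e3⟩]
              rw [hm] at hN ⊢
              exact ins_eq_cons_aux (m := (⟨a, b, f⟩ : Letter B)) hf rfl hN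
            · -- f ≫ g not an identity
              rw [ins_of_merge (f ≫ g) hfg rfl ms]
              have hY : (⟨a, b, (f ≫ g) ≫ eqToHom rfl ≫ mhom⟩ : Letter B) = ⟨a, b, f⟩ := by
                apply letter_hom_congr
                calc (f ≫ g) ≫ eqToHom rfl ≫ mhom = f ≫ (g ≫ mhom) := by simp
                _ = f := by rw [e2']; simp
              rw [hY, if_neg hf]
              exact ins_eq_cons_aux (m := (⟨d, b, mhom⟩ : Letter B)) hf rfl hN
          · -- `g` merges with `m` without cancelling
            rw [if_neg hX]
            rw [ins_of_merge f hf rfl]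
            by_cases hfg : (⟨a, d, f ≫ g⟩ : Letter B).isId
            · -- f ≫ g identity: then f⋆(g⋆m) ≃ m
              obtain ⟨h3, e3⟩ := hfg
              dsimp only at h3 e3
              subst h3
              have e3' : f ≫ g = 𝟙 a := by simpa using e3
              have hZ : (⟨a, mtgt, f ≫ eqToHom rfl ≫ (g ≫ eqToHom rfl ≫ mhom)⟩ : Letter B)
                  = ⟨a, mtgt, mhom⟩ := by
                apply letter_hom_congr
                calc f ≫ eqToHom rfl ≫ (g ≫ eqToHom rfl ≫ mhom) = (f ≫ g) ≫ mhom := by simp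
                _ = mhom := by rw [e3']; simp
              rw [hZ, if_neg (hN.head_not_isId)]
              rw [ins_of_isId ⟨rfl, by simpa using e3⟩]
            · rw [ins_of_merge (f ≫ g) hfg rfl ms]
              rw [letter_hom_congr
                (show f ≫ eqToHom rfl ≫ (g ≫ eqToHom rfl ≫ mhom)
                    = (f ≫ g) ≫ eqToHom rfl ≫ mhom by simp)]
        · -- `g` does not merge with `m`
          rw [ins_of_no_merge hg hgm]
          rw [ins_of_merge f hf rfl]
          rw [letter_hom_congr (show f ≫ eqToHom rfl ≫ g = f ≫ g by simp)]
          by_cases hfg : (⟨a, d, f ≫ g⟩ : Letter B).isId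
          · rw [if_pos hfg, ins_of_isId hfg]
          · rw [if_neg hfg, ins_of_no_merge hfg hgm]

end InsIns


section InsInsR

lemma Letter.ext'' {l r : Letter B} (h1 : l.src = r.src) (h2 : l.tgt = r.tgt)
    (h3 : l.hom = eqToHom h1 ≫ r.hom ≫ eqToHom h2.symm) : l = r := by
  cases l; cases r
  dsimp only at h1 h2 h3
  subst h1; subst h2
  simp only [eqToHom_refl, Category.comp_id, Category.id_comp] at h3
  rw [h3]

open Classical in
lemma ins_of_merge' {l m : Letter B} (hl : ¬ l.isId) (h : l.tgt = m.src)
    (ms : List (Letter B)) :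
    ins l (m :: ms) =
      if (⟨l.src, m.tgt, l.hom ≫ eqToHom h ≫ m.hom⟩ : Letter B).isId then ms
      else ⟨l.src, m.tgt, l.hom ≫ eqToHom h ≫ m.hom⟩ :: ms := by
  cases l
  exact ins_of_merge _ hl h ms

open Classical in
lemma insR_of_isId {l : Letter B} (h : l.isId) (t : List (Letter B)) : insR l t = t := by
  match t with
  | [] => simp [insR, h]
  | [m] => simp [insR, h]
  | m :: m' :: ms => simp [insR, h]

open Classical in
lemma insR_nil {l : Letter B} (hl : ¬ l.isId) : insR l [] = [l] := by simp [insR, hl]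

open Classical in
lemma insR_single_merge {l m : Letter B} (hl : ¬ l.isId) (h : m.tgt = l.src) :
    insR l [m] =
      if (⟨m.src, l.tgt, m.hom ≫ eqToHom h ≫ l.hom⟩ : Letter B).isId then []
      else [⟨m.src, l.tgt, m.hom ≫ eqToHom h ≫ l.hom⟩] := by
  simp only [insR, hl, if_false, ite_false]
  rw [dif_pos h]

open Classical in
lemma insR_single_no_merge {l m : Letter B} (hl : ¬ l.isId) (h : ¬ (m.tgt = l.src)) :
    insR l [m] = [m, l] := by
  simp only [insR, hl, if_false, ite_false]
  rw [dif_neg h]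

lemma insR_cons₂ {l : Letter B} (hl : ¬ l.isId) (m m' : Letter B) (ms : List (Letter B)) :
    insR l (m :: m' :: ms) = m :: insR l (m' :: ms) := by
  simp [insR, hl]

lemma ins_insR (l r : Letter B) (t : List (Letter B)) :
    ins l (insR r t) = insR r (ins l t) := by
  by_cases hr : r.isId
  · rw [insR_of_isId hr, insR_of_isId hr]
  · by_cases hl : l.isId
    · rw [ins_of_isId hl, ins_of_isId hl]
    · cases t with
      | nil =>
        rw [insR_nil hr, ins_of_not_isId_nil hl]
        by_cases hlr : l.tgt = r.src
        · rw [ins_of_merge' hl hlr, insR_single_merge hr hlr]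
        · rw [ins_of_no_merge hl hlr, insR_single_no_merge hr hlr]
      | cons m ms =>
        cases ms with
        | cons m' ms' =>
          rw [insR_cons₂ hr]
          by_cases hlm : l.tgt = m.src
          · rw [ins_of_merge' hl hlm, ins_of_merge' hl hlm]
            by_cases hid : (⟨l.src, m.tgt, l.hom ≫ eqToHom hlm ≫ m.hom⟩ : Letter B).isId
            · rw [if_pos hid, if_pos hid]
            · rw [if_neg hid, if_neg hid, insR_cons₂ hr]
          · rw [ins_of_no_merge hl hlm, ins_of_no_merge hl hlm,
              insR_cons₂ hr, insR_cons₂ hr]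
        | nil =>
          by_cases hmr : m.tgt = r.src
          · rw [insR_single_merge hr hmr]
            by_cases hlm : l.tgt = m.src
            · -- l merges with m (and with m⋆r)
              obtain ⟨ls, lt, lh⟩ := l
              obtain ⟨p, q, mh⟩ := m
              obtain ⟨rs, rt, rh⟩ := r
              dsimp only at hlm hmr
              subst hlm; subst hmr
              by_cases hidmr : (⟨lt, rt, mh ≫ eqToHom rfl ≫ rh⟩ : Letter B).isId
              · rw [if_pos hidmr, ins_of_not_isId_nil hl, ins_of_merge' hl rfl]
                obtain ⟨h5, e5⟩ := hidmr
                dsimp only at h5 e5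
                subst h5
                have e5' : mh ≫ rh = 𝟙 lt := by simpa using e5
                by_cases hidlm : (⟨ls, q, lh ≫ eqToHom rfl ≫ mh⟩ : Letter B).isId
                · rw [if_pos hidlm]
                  obtain ⟨h4, e4⟩ := hidlm
                  dsimp only at h4 e4
                  subst h4
                  have e4' : lh ≫ mh = 𝟙 ls := by simpa using e4
                  have : lh = rh := by
                    calc lh = lh ≫ 𝟙 lt := by simp
                    _ = lh ≫ (mh ≫ rh) := by rw [e5']
                    _ = (lh ≫ mh) ≫ rh := by simp
                    _ = 𝟙 ls ≫ rh := by rw [e4']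
                    _ = rh := by simp
                  rw [letter_hom_congr this, insR_nil hr]
                · rw [if_neg hidlm, insR_single_merge hr
                    (m := (⟨ls, q, lh ≫ eqToHom rfl ≫ mh⟩ : Letter B)) rfl]
                  dsimp only
                  have hom_eq : (lh ≫ eqToHom rfl ≫ mh) ≫ eqToHom rfl ≫ rh = lh := by
                    simp only [eqToHom_refl, Category.id_comp, Category.assoc]
                    rw [e5']; simp
                  rw [letter_hom_congr hom_eq, if_neg hl]
              · rw [if_neg hidmr,
                  ins_of_merge' hl (m := (⟨lt, rt, mh ≫ eqToHom rfl ≫ rh⟩ : Letter B)) rfl,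
                  ins_of_merge' hl rfl]
                dsimp only
                by_cases hidlm : (⟨ls, q, lh ≫ eqToHom rfl ≫ mh⟩ : Letter B).isId
                · rw [if_pos hidlm, insR_nil hr]
                  obtain ⟨h4, e4⟩ := hidlm
                  dsimp only at h4 e4
                  subst h4
                  have e4' : lh ≫ mh = 𝟙 ls := by simpa using e4
                  have hom_eq : lh ≫ eqToHom rfl ≫ (mh ≫ eqToHom rfl ≫ rh) = rh := by
                    simp only [eqToHom_refl, Category.id_comp]
                    calc lh ≫ mh ≫ rh = (lh ≫ mh) ≫ rh := by simp
                    _ = rh := by rw [e4']; simp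
                  rw [letter_hom_congr hom_eq, if_neg hr]
                · rw [if_neg hidlm, insR_single_merge hr
                    (m := (⟨ls, q, lh ≫ eqToHom rfl ≫ mh⟩ : Letter B)) rfl]
                  dsimp only
                  rw [letter_hom_congr (show lh ≫ eqToHom rfl ≫ (mh ≫ eqToHom rfl ≫ rh)
                      = (lh ≫ eqToHom rfl ≫ mh) ≫ eqToHom rfl ≫ rh by simp)]
            · -- l does not merge with m
              by_cases hidmr : (⟨m.src, r.tgt, m.hom ≫ eqToHom hmr ≫ r.hom⟩ : Letter B).isId
              · rw [if_pos hidmr, ins_of_not_isId_nil hl,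
                  ins_of_no_merge hl hlm, insR_cons₂ hr, insR_single_merge hr hmr,
                  if_pos hidmr]
              · rw [if_neg hidmr,
                  ins_of_no_merge hl (m := (⟨m.src, r.tgt, m.hom ≫ eqToHom hmr ≫ r.hom⟩ : Letter B)) hlm,
                  ins_of_no_merge hl hlm, insR_cons₂ hr, insR_single_merge hr hmr,
                  if_neg hidmr]
          · rw [insR_single_no_merge hr hmr]
            by_cases hlm : l.tgt = m.src
            · rw [ins_of_merge' hl hlm, ins_of_merge' hl hlm]
              by_cases hidlm : (⟨l.src, m.tgt, l.hom ≫ eqToHom hlm ≫ m.hom⟩ : Letter B).isId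
              · rw [if_pos hidlm, if_pos hidlm, insR_nil hr]
              · rw [if_neg hidlm, if_neg hidlm,
                  insR_single_no_merge hr (show ¬ ((⟨l.src, m.tgt, l.hom ≫ eqToHom hlm ≫ m.hom⟩ : Letter B).tgt = r.src) from hmr)]
            · rw [ins_of_no_merge hl hlm, ins_of_no_merge hl hlm, insR_cons₂ hr,
                insR_single_no_merge hr hmr]

end InsInsR


section Consume

lemma nf_concat (ms : List (Letter B)) (l : Letter B) : nf (ms ++ [l]) = insR l (nf ms) := by
  induction ms with
  | nil =>
    show ins l [] = insR l []
    by_cases hl : l.isId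
    · rw [ins_of_isId hl, insR_of_isId hl]
    · rw [ins_of_not_isId_nil hl, insR_nil hl]
  | cons m ms ih =>
    show ins m (nf (ms ++ [l])) = insR l (ins m (nf ms))
    rw [ih, ins_insR]

lemma step_none {y : B} (l : Letter B) : step l (none : St y) = none := rfl

lemma consume_none {y : B} (t : List (Letter B)) : consume t (none : St y) = none := by
  induction t with
  | nil => rfl
  | cons l t ih => show step l (consume t none) = none; rw [ih]; rfl

lemma consume_cons {y : B} (l : Letter B) (t : List (Letter B)) (st : St y) :
    consume (l :: t) st = step l (consume t st) := rfl

open Classical in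
lemma step_some {y : B} (l : Letter B) (hl : ¬ l.isId) (c : B) (u : c ⟶ y) :
    step l (some ⟨c, u⟩) =
      if h : l.tgt = c then some ⟨l.src, l.hom ≫ eqToHom h ≫ u⟩ else none := by
  simp [step, hl]

lemma step_isId {y : B} {l : Letter B} (hl : l.isId) (c : B) (u : c ⟶ y) :
    step l (some ⟨c, u⟩) = some ⟨c, u⟩ := by
  simp [step, hl]

lemma consume_insR {y c c' : B} (f : c ⟶ c') (u : c' ⟶ y) {t : List (Letter B)}
    (hN : Normal t) :
    consume (insR ⟨c, c', f⟩ t) (some ⟨c', u⟩) = consume t (some ⟨c, f ≫ u⟩) := by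
  by_cases hf : (⟨c, c', f⟩ : Letter B).isId
  · obtain ⟨h, e⟩ := hf
    dsimp only at h e
    subst h
    have : f = 𝟙 c := by simpa using e
    subst this
    rw [insR_of_isId (Letter.isId_mk_id c)]
    simp
  · induction t with
    | nil =>
      rw [insR_nil hf]
      simp only [consume, List.foldr]
      rw [step_some _ hf, dif_pos rfl]
      simp
    | cons m ms ih =>
      cases ms with
      | nil =>
        have hm : ¬ m.isId := hN.head_not_isId
        by_cases hc : m.tgt = c
        · rw [insR_single_merge hf hc]
          by_cases hX : (⟨m.src, c', m.hom ≫ eqToHom hc ≫ f⟩ : Letter B).isId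
          · rw [if_pos hX]
            simp only [consume, List.foldr]
            rw [step_some _ hm, dif_pos hc]
            obtain ⟨p, q, mh⟩ := m
            dsimp only at hc hX ⊢
            subst hc
            obtain ⟨h6, e6⟩ := hX
            dsimp only at h6 e6
            subst h6
            have e6' : mh ≫ f = 𝟙 p := by simpa using e6
            have : mh ≫ eqToHom rfl ≫ f ≫ u = u := by
              simp only [eqToHom_refl, Category.id_comp]
              rw [← Category.assoc, e6', Category.id_comp]
            rw [this]
          · rw [if_neg hX]
            simp only [consume, List.foldr]
            rw [step_some _ hX, step_some _ hm, dif_pos hc]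
            rw [dif_pos rfl]
            obtain ⟨p, q, mh⟩ := m
            dsimp only at hc ⊢
            subst hc
            simp
        · rw [insR_single_no_merge hf hc]
          simp only [consume, List.foldr]
          rw [step_some _ hf, dif_pos rfl]
          congr 2
          simp
      | cons m' ms' =>
        rw [insR_cons₂ hf, consume_cons, consume_cons, ih hN.tail]

end Consume


section VfinSection

variable (G : B ⥤ Type v)

open Classical in
noncomputable def Vfin {y : B} (b : B) (g : G.obj b) : St y → Option (G.obj y)
  | none => none
  | some ⟨c, u⟩ => if h : b = c then some (G.map (eqToHom h ≫ u) g) else none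

lemma Vfin_consume_ins {y b b' : B} (f : b ⟶ b') (g : G.obj b) {t : List (Letter B)}
    (hN : Normal t) (st : St y) :
    Vfin G b g (consume (ins ⟨b, b', f⟩ t) st) = Vfin G b' (G.map f g) (consume t st) := by
  by_cases hf : (⟨b, b', f⟩ : Letter B).isId
  · obtain ⟨h, e⟩ := hf
    dsimp only at h e
    subst h
    have : f = 𝟙 b := by simpa using e
    subst this
    rw [ins_of_isId (Letter.isId_mk_id b)]
    simp
  · cases t with
    | nil =>
      rw [ins_of_not_isId_nil hf]
      cases st with
      | none => rw [consume_none, consume_none]; rfl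
      | some p =>
        obtain ⟨c, u⟩ := p
        simp only [consume, List.foldr]
        rw [step_some _ hf]
        by_cases hcc : b' = c
        · subst hcc
          rw [dif_pos rfl]
          simp [Vfin, FunctorToTypes.map_comp_apply]
        · rw [dif_neg hcc]
          simp [Vfin, hcc]
    | cons m ms =>
      have hm := hN.head_not_isId
      by_cases hc : b' = m.src
      · rw [ins_of_merge' hf (show (⟨b, b', f⟩ : Letter B).tgt = m.src from hc)]
        by_cases hX : (⟨b, m.tgt, f ≫ eqToHom hc ≫ m.hom⟩ : Letter B).isId
        · rw [if_pos hX, consume_cons]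
          rcases hY : consume ms st with _ | ⟨c, u⟩
          · rw [step_none]; rfl
          · rw [step_some _ hm]
            obtain ⟨p, q, mh⟩ := m
            dsimp only at hc hX ⊢
            subst hc
            obtain ⟨h7, e7⟩ := hX
            dsimp only at h7 e7
            subst h7
            have e7' : f ≫ mh = 𝟙 b := by simpa using e7
            by_cases hqc : b = c
            · subst hqc
              rw [dif_pos rfl]
              simp only [Vfin, eqToHom_refl, Category.id_comp, dif_pos rfl]
              congr 1
              rw [← FunctorToTypes.map_comp_apply, ← Category.assoc, e7', Category.id_comp]
            · rw [dif_neg hqc]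
              simp [Vfin, hqc]
        · rw [if_neg hX, consume_cons, consume_cons]
          rcases hY : consume ms st with _ | ⟨c, u⟩
          · rw [step_none, step_none]; rfl
          · rw [step_some _ hX, step_some _ hm]
            obtain ⟨p, q, mh⟩ := m
            dsimp only at hc hX ⊢
            subst hc
            by_cases hqc : q = c
            · rw [dif_pos hqc, dif_pos hqc]
              subst hqc
              simp only [Vfin, eqToHom_refl, Category.id_comp, dif_pos rfl]
              congr 1
              rw [← FunctorToTypes.map_comp_apply]
              congr 1
              simp
            · rw [dif_neg hqc, dif_neg hqc]; rfl
      · rw [ins_of_no_merge hf (show ¬ ((⟨b, b', f⟩ : Letter B).tgt = m.src) from hc),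
          consume_cons, consume_cons]
        rcases hZ : step m (consume ms st) with _ | ⟨c, u⟩
        · rw [step_none]; rfl
        · rw [step_some _ hf]
          by_cases hcc : b' = c
          · subst hcc
            rw [dif_pos rfl]
            simp only [Vfin, eqToHom_refl, Category.id_comp, dif_pos rfl]
            congr 1
            rw [← FunctorToTypes.map_comp_apply]
          · rw [dif_neg hcc]
            simp [Vfin, hcc]

end VfinSection


section PopLemmas

lemma popOne_single_pos {y : B} {m : Letter B} {c : B} (hp : m.tgt = c) (u : c ⟶ y) :
    popOne [m] c u = ⟨m.src, [], m.hom ≫ eqToHom hp ≫ u⟩ := by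
  simp only [popOne]
  rw [dif_pos hp]

lemma popOne_single_neg {y : B} {m : Letter B} {c : B} (hp : ¬ m.tgt = c) (u : c ⟶ y) :
    popOne [m] c u = ⟨c, [m], u⟩ := by
  simp only [popOne]
  rw [dif_neg hp]

lemma popOne_cons₂ {y : B} (m m' : Letter B) (ms : List (Letter B)) (c : B) (u : c ⟶ y) :
    popOne (m :: m' :: ms) c u =
      ⟨(popOne (m' :: ms) c u).1, m :: (popOne (m' :: ms) c u).2.1,
        (popOne (m' :: ms) c u).2.2⟩ := rfl

lemma consume_popOne {y : B} {t : List (Letter B)} (hN : Normal t) (c : B) (u : c ⟶ y) :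
    consume t (some ⟨c, u⟩) =
      consume (popOne t c u).2.1 (some ⟨(popOne t c u).1, (popOne t c u).2.2⟩) := by
  induction t with
  | nil => rfl
  | cons m ms ih =>
    cases ms with
    | nil =>
      by_cases hp : m.tgt = c
      · rw [popOne_single_pos hp]
        simp only [consume, List.foldr]
        rw [step_some _ hN.head_not_isId, dif_pos hp]
      · rw [popOne_single_neg hp]
    | cons m' ms' =>
      rw [popOne_cons₂]
      dsimp only
      rw [consume_cons]
      exact congrArg (step m) (ih hN.tail)

lemma popOne_stuck {y : B} {t : List (Letter B)} (hN : Normal t) (c : B) (u : c ⟶ y)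
    (hne : (popOne t c u).2.1 ≠ []) :
    consume (popOne t c u).2.1 (some ⟨(popOne t c u).1, (popOne t c u).2.2⟩) = none := by
  induction t with
  | nil => exact absurd rfl hne
  | cons m ms ih =>
    cases ms with
    | nil =>
      by_cases hp : m.tgt = c
      · rw [popOne_single_pos hp] at hne
        exact absurd rfl hne
      · rw [popOne_single_neg hp]
        simp only [consume, List.foldr]
        rw [step_some _ hN.head_not_isId, dif_neg hp]
    | cons m' ms' =>
      rw [popOne_cons₂]
      dsimp only
      rw [consume_cons]
      by_cases hr : (popOne (m' :: ms') c u).2.1 = []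
      · cases ms' with
        | cons m'' ms'' =>
          rw [popOne_cons₂] at hr
          dsimp only at hr
          exact absurd hr (List.cons_ne_nil _ _)
        | nil =>
          by_cases hp : m'.tgt = c
          · rw [popOne_single_pos hp]
            simp only [consume, List.foldr]
            cases hN with
            | cons hm hnc hN' =>
              rw [step_some _ hm, dif_neg hnc]
          · rw [popOne_single_neg hp] at hr
            exact absurd hr (by simp)
      · rw [ih hN.tail hr, step_none]

end PopLemmas

section VrawSection

variable (G : B ⥤ Type v)

/-- Raw data for the coend `Q`. -/
abbrev QRaw (y : B) : Type v := Σ b : B, G.obj b × PRaw y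

noncomputable def Vraw {y : B} (q : QRaw G y) : Option (G.obj y) :=
  Vfin G q.1 q.2.1 (consume (nf q.2.2.2.1) (some ⟨q.2.2.1, q.2.2.2.2⟩))

/-- Normal form of a raw element of `P`. -/
noncomputable def PNFraw {y : B} (p : PRaw y) : PRaw y := popOne (nf p.2.1) p.1 p.2.2

lemma Vraw_eq_some {y b : B} (g : G.obj b) (p : PRaw y) {h : G.obj y}
    (hv : Vraw G ⟨b, g, p⟩ = some h) :
    (PNFraw p).2.1 = [] ∧
      ∃ hc : b = (PNFraw p).1, G.map (eqToHom hc ≫ (PNFraw p).2.2) g = h := by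
  obtain ⟨c, ms, u⟩ := p
  have hv' : Vfin G b g (consume (nf ms) (some ⟨c, u⟩)) = some h := hv
  rw [consume_popOne (normal_nf ms) c u] at hv'
  by_cases hne : (popOne (nf ms) c u).2.1 = []
  · refine ⟨hne, ?_⟩
    rw [hne] at hv'
    simp only [consume, List.foldr] at hv'
    by_cases hc : b = (popOne (nf ms) c u).1
    · refine ⟨hc, ?_⟩
      rw [show Vfin G b g (some ⟨(popOne (nf ms) c u).1, (popOne (nf ms) c u).2.2⟩)
          = some (G.map (eqToHom hc ≫ (popOne (nf ms) c u).2.2) g) from by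
            simp [Vfin, hc]] at hv'
      exact Option.some.inj hv'
    · rw [show Vfin G b g (some ⟨(popOne (nf ms) c u).1, (popOne (nf ms) c u).2.2⟩)
          = none from by simp [Vfin, hc]] at hv'
      exact absurd hv' (by simp)
  · rw [popOne_stuck (normal_nf ms) c u hne] at hv'
    exact absurd hv' (by simp [Vfin])

end VrawSection


section NFLemmas

lemma nf_middle_merge (xs ys : List (Letter B)) {a b d : B} (f : a ⟶ b) (g : b ⟶ d) :
    nf (xs ++ ⟨a, b, f⟩ :: ⟨b, d, g⟩ :: ys) = nf (xs ++ ⟨a, d, f ≫ g⟩ :: ys) := by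
  rw [nf_append, nf_append]
  congr 1
  show ins ⟨a, b, f⟩ (ins ⟨b, d, g⟩ (nf ys)) = ins ⟨a, d, f ≫ g⟩ (nf ys)
  exact ins_ins f g (normal_nf ys)

lemma nf_middle_drop (xs ys : List (Letter B)) (a : B) :
    nf (xs ++ ⟨a, a, 𝟙 a⟩ :: ys) = nf (xs ++ ys) := by
  rw [nf_append, nf_append]
  congr 1
  exact ins_of_isId (Letter.isId_mk_id a) (nf ys)

open Classical in
lemma insR_eq_nil {l : Letter B} (hl : ¬ l.isId) {t : List (Letter B)}
    (h : insR l t = []) :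
    ∃ m, t = [m] ∧ ∃ hm : m.tgt = l.src,
      (⟨m.src, l.tgt, m.hom ≫ eqToHom hm ≫ l.hom⟩ : Letter B).isId := by
  cases t with
  | nil => rw [insR_nil hl] at h; exact absurd h (by simp)
  | cons m ms =>
    cases ms with
    | nil =>
      by_cases hm : m.tgt = l.src
      · rw [insR_single_merge hl hm] at h
        by_cases hid : (⟨m.src, l.tgt, m.hom ≫ eqToHom hm ≫ l.hom⟩ : Letter B).isId
        · exact ⟨m, rfl, hm, hid⟩
        · rw [if_neg hid] at h; exact absurd h (by simp)
      · rw [insR_single_no_merge hl hm] at h; exact absurd h (by simp)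
    | cons m' ms' =>
      rw [insR_cons₂ hl] at h
      exact absurd h (by simp)

lemma popOne_map {y y' : B} (v : y ⟶ y') (t : List (Letter B)) (c : B) (u : c ⟶ y) :
    popOne t c (u ≫ v) =
      ⟨(popOne t c u).1, (popOne t c u).2.1, (popOne t c u).2.2 ≫ v⟩ := by
  induction t with
  | nil => rfl
  | cons m ms ih =>
    cases ms with
    | nil =>
      by_cases hp : m.tgt = c
      · rw [popOne_single_pos hp, popOne_single_pos hp]
        simp
      · rw [popOne_single_neg hp, popOne_single_neg hp]
    | cons m' ms' =>
      rw [popOne_cons₂, popOne_cons₂, ih]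

lemma popOne_insR {y c c' : B} (f : c ⟶ c') (u : c' ⟶ y) {t : List (Letter B)}
    (hN : Normal t) :
    popOne (insR ⟨c, c', f⟩ t) c' u = popOne t c (f ≫ u) := by
  by_cases hf : (⟨c, c', f⟩ : Letter B).isId
  · obtain ⟨h, e⟩ := hf
    dsimp only at h e
    subst h
    have : f = 𝟙 c := by simpa using e
    subst this
    rw [insR_of_isId (Letter.isId_mk_id c)]
    congr 1
    simp
  · induction t with
    | nil =>
      rw [insR_nil hf, popOne_single_pos rfl]
      dsimp only [popOne]
      congr 1
      simp
    | cons m ms ih =>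
      cases ms with
      | nil =>
        by_cases hm : m.tgt = c
        · rw [insR_single_merge hf hm]
          by_cases hX : (⟨m.src, c', m.hom ≫ eqToHom hm ≫ f⟩ : Letter B).isId
          · rw [if_pos hX]
            rw [popOne_single_pos hm]
            obtain ⟨p, q, mh⟩ := m
            dsimp only at hm hX ⊢
            subst hm
            obtain ⟨h6, e6⟩ := hX
            dsimp only at h6 e6
            subst h6
            have e6' : mh ≫ f = 𝟙 p := by simpa using e6
            have hval : mh ≫ eqToHom rfl ≫ f ≫ u = u := by
              simp only [eqToHom_refl, Category.id_comp]
              rw [← Category.assoc, e6', Category.id_comp]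
            rw [hval]
            rfl
          · rw [if_neg hX, popOne_single_pos (show (⟨m.src, c', m.hom ≫ eqToHom hm ≫ f⟩ : Letter B).tgt = c' from rfl),
              popOne_single_pos hm]
            obtain ⟨p, q, mh⟩ := m
            dsimp only at hm ⊢
            subst hm
            have hval : (mh ≫ eqToHom rfl ≫ f) ≫ eqToHom rfl ≫ u
                = mh ≫ eqToHom rfl ≫ f ≫ u := by simp
            rw [hval]
        · rw [insR_single_no_merge hf hm, popOne_cons₂,
            popOne_single_pos (show (⟨c, c', f⟩ : Letter B).tgt = c' from rfl),
            popOne_single_neg hm]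
          dsimp only
          have hval : f ≫ eqToHom rfl ≫ u = f ≫ u := by simp
          rw [hval]
      | cons m' ms' =>
        rw [insR_cons₂ hf]
        rcases hx : insR (⟨c, c', f⟩ : Letter B) (m' :: ms') with _ | ⟨x, xs⟩
        · -- the inner insertion cancelled everything
          obtain ⟨m₀, hm₀, hmtgt, hid⟩ := insR_eq_nil hf hx
          obtain ⟨heq1, heq2⟩ := List.cons.inj hm₀
          subst heq2
          subst heq1
          obtain ⟨p, q, mh⟩ := m'
          dsimp only at hmtgt hid
          subst hmtgt
          obtain ⟨h6, e6⟩ := hid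
          dsimp only at h6 e6
          subst h6
          have e6' : mh ≫ f = 𝟙 p := by simpa using e6
          have hnc : m.tgt ≠ p := by
            cases hN with
            | cons _ hnc _ => exact hnc
          rw [popOne_single_neg hnc, popOne_cons₂, popOne_single_pos rfl]
          dsimp only
          congr 1
          simp only [eqToHom_refl, Category.id_comp]
          rw [← Category.assoc, e6', Category.id_comp]
        · rw [popOne_cons₂ m x xs, popOne_cons₂ m m' ms']
          have h2 := ih hN.tail
          rw [hx] at h2
          rw [h2]
  
end NFLemmas


section Relations

/-- Relations defining the presheaf `P`. -/
inductive PRel (y : B) : PRaw y → PRaw y → Prop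
  | merge (c : B) (u : c ⟶ y) (xs ys : List (Letter B)) {a b d : B} (f : a ⟶ b) (g : b ⟶ d) :
      PRel y ⟨c, xs ++ ⟨a, b, f⟩ :: ⟨b, d, g⟩ :: ys, u⟩ ⟨c, xs ++ ⟨a, d, f ≫ g⟩ :: ys, u⟩
  | dropId (c : B) (u : c ⟶ y) (xs ys : List (Letter B)) (a : B) :
      PRel y ⟨c, xs ++ ⟨a, a, 𝟙 a⟩ :: ys, u⟩ ⟨c, xs ++ ys, u⟩
  | pop {c c' : B} (f : c ⟶ c') (ms : List (Letter B)) (u : c' ⟶ y) :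
      PRel y ⟨c', ms ++ [⟨c, c', f⟩], u⟩ ⟨c, ms, f ≫ u⟩

variable (G : B ⥤ Type v)

/-- Relations defining the coend `Q`. -/
inductive QRel (y : B) : QRaw G y → QRaw G y → Prop
  | inner (b : B) (g : G.obj b) {p p' : PRaw y} (h : PRel y p p') :
      QRel y ⟨b, g, p⟩ ⟨b, g, p'⟩
  | outer {b b' : B} (f : b ⟶ b') (g : G.obj b) (p : PRaw y) :
      QRel y ⟨b', G.map f g, p⟩ ⟨b, g, ⟨p.1, ⟨b, b', f⟩ :: p.2.1, p.2.2⟩⟩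

lemma PNFraw_rel {y : B} {p p' : PRaw y} (h : PRel y p p') : PNFraw p = PNFraw p' := by
  cases h with
  | merge c u xs ys f g =>
    show popOne (nf _) c u = popOne (nf _) c u
    rw [nf_middle_merge]
  | dropId c u xs ys a =>
    show popOne (nf _) c u = popOne (nf _) c u
    rw [nf_middle_drop]
  | pop f ms u =>
    show popOne (nf (ms ++ [_])) _ u = popOne (nf ms) _ (f ≫ u)
    rw [nf_concat]
    exact popOne_insR f u (normal_nf ms)

lemma Vraw_rel {y : B} {q q' : QRaw G y} (h : QRel G y q q') : Vraw G q = Vraw G q' := by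
  cases h with
  | inner b g hp =>
    cases hp with
    | merge c u xs ys f g' =>
      show Vfin G b g (consume (nf _) _) = Vfin G b g (consume (nf _) _)
      rw [nf_middle_merge]
    | dropId c u xs ys a =>
      show Vfin G b g (consume (nf _) _) = Vfin G b g (consume (nf _) _)
      rw [nf_middle_drop]
    | pop f ms u =>
      show Vfin G b g (consume (nf (ms ++ [_])) (some ⟨_, u⟩))
          = Vfin G b g (consume (nf ms) (some ⟨_, f ≫ u⟩))
      rw [nf_concat, consume_insR f u (normal_nf ms)]
  | outer f g p =>
    obtain ⟨c, ms, u⟩ := p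
    exact (Vfin_consume_ins G f g (normal_nf ms) (some ⟨c, u⟩)).symm

lemma PNFraw_map {y y' : B} (v : y ⟶ y') (p : PRaw y) :
    PNFraw (⟨p.1, p.2.1, p.2.2 ≫ v⟩ : PRaw y') =
      ⟨(PNFraw p).1, (PNFraw p).2.1, (PNFraw p).2.2 ≫ v⟩ := by
  obtain ⟨c, ms, u⟩ := p
  exact popOne_map v (nf ms) c u

end Relations


section CatLayer

variable (G : B ⥤ Type v)

/-- The `B`-presheaf `P`. -/
def Pfun : B ⥤ Type v where
  obj y := Quot (PRel y)
  map {y y'} v := TypeCat.ofHom (Quot.lift (fun p => Quot.mk _ (⟨p.1, p.2.1, p.2.2 ≫ v⟩ : PRaw y'))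
    (by
      intro p p' h
      apply Quot.sound
      cases h with
      | merge c u xs ys f g => exact PRel.merge c (u ≫ v) xs ys f g
      | dropId c u xs ys a => exact PRel.dropId c (u ≫ v) xs ys a
      | pop f ms u => simpa [Category.assoc] using PRel.pop (y := y') f ms (u ≫ v)))
  map_id y := by
    refine tHomExt fun q => ?_
    induction q using Quot.ind with
    | _ p =>
      apply congrArg (Quot.mk _)
      obtain ⟨c, ms, u⟩ := p
      simp
  map_comp {x y z} v w := by
    refine tHomExt fun q => ?_
    induction q using Quot.ind with
    | _ p =>
      apply congrArg (Quot.mk _)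
      obtain ⟨c, ms, u⟩ := p
      simp

/-- The action of an arrow of `B` on `P` (prepending a letter). -/
def sig {b b' : B} (f : b ⟶ b') : Pfun (B := B) ⟶ Pfun (B := B) where
  app y := TypeCat.ofHom (Quot.lift (fun p => Quot.mk _ (⟨p.1, ⟨b, b', f⟩ :: p.2.1, p.2.2⟩ : PRaw y))
    (by
      intro p p' h
      apply Quot.sound
      cases h with
      | merge c u xs ys f' g' => exact PRel.merge c u (⟨b, b', f⟩ :: xs) ys f' g'
      | dropId c u xs ys a => exact PRel.dropId c u (⟨b, b', f⟩ :: xs) ys a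
      | pop f' ms u => exact PRel.pop f' (⟨b, b', f⟩ :: ms) u))
  naturality y y' v := by
    refine tHomExt fun q => ?_
    induction q using Quot.ind with
    | _ p => rfl

/-- The `B`-presheaf `Q`, the `G`-weighted colimit of the constant diagram at `P`. -/
def Qfun : B ⥤ Type v where
  obj y := Quot (QRel G y)
  map {y y'} v := TypeCat.ofHom (Quot.lift
    (fun q => Quot.mk _ (⟨q.1, q.2.1, ⟨q.2.2.1, q.2.2.2.1, q.2.2.2.2 ≫ v⟩⟩ : QRaw G y'))
    (by
      intro q q' h
      apply Quot.sound
      cases h with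
      | inner b g hp =>
        refine QRel.inner b g ?_
        cases hp with
        | merge c u xs ys f g' => exact PRel.merge c (u ≫ v) xs ys f g'
        | dropId c u xs ys a => exact PRel.dropId c (u ≫ v) xs ys a
        | pop f ms u => simpa [Category.assoc] using PRel.pop (y := y') f ms (u ≫ v)
      | outer f g p => exact QRel.outer f g ⟨p.1, p.2.1, p.2.2 ≫ v⟩))
  map_id y := by
    refine tHomExt fun q => ?_
    induction q using Quot.ind with
    | _ p =>
      apply congrArg (Quot.mk _)
      obtain ⟨b, g, c, ms, u⟩ := p
      simp
  map_comp {x y z} v w := by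
    refine tHomExt fun q => ?_
    induction q using Quot.ind with
    | _ p =>
      apply congrArg (Quot.mk _)
      obtain ⟨b, g, c, ms, u⟩ := p
      simp

/-- The coend injections. -/
def iota (b : B) (g : G.obj b) : Pfun (B := B) ⟶ Qfun G where
  app y := TypeCat.ofHom (Quot.lift (fun p => Quot.mk _ (⟨b, g, p⟩ : QRaw G y))
    (fun _ _ h => Quot.sound (QRel.inner b g h)))
  naturality y y' v := by
    refine tHomExt fun q => ?_
    induction q using Quot.ind with
    | _ p => rfl

lemma iota_twist {b b' : B} (f : b ⟶ b') (g : G.obj b) :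
    iota G b' (G.map f g) = sig f ≫ iota G b g := by
  apply NatTrans.ext
  funext y
  refine tHomExt fun q => ?_
  induction q using Quot.ind with
  | _ p => exact Quot.sound (QRel.outer f g p)

/-- The tautological natural transformation `γ : G ⟶ Q`. -/
def gam : G ⟶ Qfun G where
  app y := TypeCat.ofHom fun h => Quot.mk _ (⟨y, h, ⟨y, [], 𝟙 y⟩⟩ : QRaw G y)
  naturality y y' f := by
    refine tHomExt fun h => ?_
    show Quot.mk _ (⟨y', G.map f h, ⟨y', [], 𝟙 y'⟩⟩ : QRaw G y')
      = Quot.mk _ (⟨y, h, ⟨y, [], 𝟙 y ≫ f⟩⟩ : QRaw G y')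
    have s1 : Quot.mk (QRel G y') (⟨y', G.map f h, ⟨y', [], 𝟙 y'⟩⟩ : QRaw G y')
        = Quot.mk _ (⟨y, h, ⟨y', [⟨y, y', f⟩], 𝟙 y'⟩⟩ : QRaw G y') :=
      Quot.sound (QRel.outer f h ⟨y', [], 𝟙 y'⟩)
    have s2 : Quot.mk (QRel G y') (⟨y, h, ⟨y', [⟨y, y', f⟩], 𝟙 y'⟩⟩ : QRaw G y')
        = Quot.mk _ (⟨y, h, ⟨y, [], f ≫ 𝟙 y'⟩⟩ : QRaw G y') :=
      Quot.sound (QRel.inner y h (PRel.pop f [] (𝟙 y')))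
    rw [s1, s2]
    apply congrArg (Quot.mk _)
    simp

end CatLayer


section ACatLayer

/-- Two objects, for the small category `A`. -/
inductive WObj : Type u where
  | P : WObj
  | Q : WObj

variable (G : B ⥤ Type v)

/-- Realization of the two objects as presheaves. -/
def wToF : WObj.{u} → (B ⥤ Type v)
  | .P => Pfun (B := B)
  | .Q => Qfun G

/-- The two-object category `A`. -/
abbrev ACat := InducedCategory (B ⥤ Type v) (wToF.{v, u} G)

instance : Category.{v} (ACat.{v, u} G) := InducedCategory.instCategory

/-- The object `P` of `A`. -/
def pObj : ACat.{v, u} G := WObj.P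

/-- The object `Q` of `A`. -/
def qObj : ACat.{v, u} G := WObj.Q

/-- The diagram `S : Bᵒᵖ ⥤ A`, constant at `P`, acting via `sig`. -/
def SF : Bᵒᵖ ⥤ ACat.{v, u} G where
  obj _ := pObj G
  map {x y} h := InducedCategory.homMk (sig h.unop)
  map_id x := by
    apply InducedCategory.hom_ext
    apply NatTrans.ext
    funext y
    refine tHomExt fun q => ?_
    induction q using Quot.ind with
    | _ p =>
      obtain ⟨c, ms, u⟩ := p
      exact Quot.sound (PRel.dropId c u [] ms x.unop)
  map_comp {x y z} h₁ h₂ := by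
    apply InducedCategory.hom_ext
    apply NatTrans.ext
    funext w
    refine tHomExt fun q => ?_
    induction q using Quot.ind with
    | _ p =>
      obtain ⟨c, ms, u⟩ := p
      exact (Quot.sound (PRel.merge c u [] ms h₂.unop h₁.unop)).symm

/-- Forward map of the weighted-colimit bijection. -/
def eFwd (a : ACat.{v, u} G) (u' : qObj.{v, u} G ⟶ a) :
    G ⟶ (SF.{v, u} G).rightOp ⋙ yoneda.obj a where
  app b := TypeCat.ofHom fun g => (InducedCategory.homMk (iota G b g) : pObj.{v, u} G ⟶ qObj G) ≫ u'
  naturality b b' f := by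
    refine tHomExt fun g => ?_
    show (InducedCategory.homMk (iota G b' (G.map f g)) : pObj.{v, u} G ⟶ qObj G) ≫ u' =
      (InducedCategory.homMk (sig f) : pObj.{v, u} G ⟶ pObj G) ≫
        ((InducedCategory.homMk (iota G b g) : pObj.{v, u} G ⟶ qObj G) ≫ u')
    rw [← Category.assoc]
    congr 1
    apply InducedCategory.hom_ext
    exact iota_twist G f g

/-- Backward map of the weighted-colimit bijection. -/
def eInv (a : ACat.{v, u} G) (α : G ⟶ (SF.{v, u} G).rightOp ⋙ yoneda.obj a) :
    qObj.{v, u} G ⟶ a := InducedCategory.homMk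
  { app y := TypeCat.ofHom (Quot.lift
      (fun q => (InducedCategory.Hom.hom (α.app q.1 q.2.1)).app y (Quot.mk _ q.2.2))
      (by
        intro q q' h
        cases h with
        | inner b g hp =>
          exact congrArg ((InducedCategory.Hom.hom (α.app b g)).app y) (Quot.sound hp)
        | outer f g p =>
          dsimp only
          have hnat := NatTrans.naturality_apply α f g
          rw [hnat]
          rfl))
    naturality y y' v := by
      refine tHomExt fun q => ?_
      induction q using Quot.ind with
      | _ p => exact NatTrans.naturality_apply (InducedCategory.Hom.hom (α.app p.1 p.2.1)) v (Quot.mk _ p.2.2) }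

/-- `Q` is the `G`-weighted colimit of `S`. -/
noncomputable def wQ : WColim G (SF.{v, u} G) (qObj.{v, u} G) where
  e a :=
    { toFun := eFwd G a
      invFun := eInv G a
      left_inv := by
        intro u'
        apply InducedCategory.hom_ext
        apply NatTrans.ext
        funext y
        refine tHomExt fun q => ?_
        induction q using Quot.ind with
        | _ p => rfl
      right_inv := by
        intro α
        apply NatTrans.ext
        funext b
        refine tHomExt fun g => ?_
        apply InducedCategory.hom_ext
        apply NatTrans.ext
        funext y
        refine tHomExt fun q => ?_
        induction q using Quot.ind with
        | _ p => rfl }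
  nat {a a'} f u' := by
    apply NatTrans.ext
    funext b
    refine tHomExt fun g => ?_
    show (InducedCategory.homMk (iota G b g) : pObj.{v, u} G ⟶ qObj G) ≫ (u' ≫ f) =
      ((InducedCategory.homMk (iota G b g) : pObj.{v, u} G ⟶ qObj G) ≫ u') ≫ f
    rw [Category.assoc]

end ACatLayer


section CCatLayer

/-- Three objects, for the small category `C`. -/
inductive CObj : Type u' where
  | TP : CObj
  | TQ : CObj
  | TB : CObj

variable (G : B ⥤ Type v)

/-- Realization of the three objects as types. -/
def cToT : CObj.{u'} → Type v
  | .TP => (G ⟶ Pfun (B := B))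
  | .TQ => (G ⟶ Qfun G)
  | .TB => ULift.{v} Prop

/-- The three-object category `C`. -/
abbrev CCat := InducedCategory (Type v) (cToT.{v, u'} G)

instance : Category.{v} (CCat.{v, u'} G) := InducedCategory.instCategory

/-- The object `T P` of `C`. -/
def tpObj : CCat.{v, u'} G := CObj.TP

/-- The object `T Q` of `C`. -/
def tqObj : CCat.{v, u'} G := CObj.TQ

/-- The test object of `C`. -/
def tbObj : CCat.{v, u'} G := CObj.TB

/-- The node function of the test functor. -/
def tObj : WObj.{u} → CCat.{v, u'} G
  | .P => tpObj G
  | .Q => tqObj G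

/-- The underlying natural transformation of a morphism of `A`. -/
def hh {X Y : ACat.{v, u} G} (φ : X ⟶ Y) : wToF G X ⟶ wToF G Y := InducedCategory.Hom.hom φ

/-- The test functor `T = Hom(G, -) : A ⥤ C`. -/
def TF : ACat.{v, u} G ⥤ CCat.{v, u'} G where
  obj x := tObj G x
  map {x y} φ :=
    match x, y, φ with
    | WObj.P, WObj.P, φ => InducedCategory.homMk (TypeCat.ofHom fun η => η ≫ hh G φ)
    | WObj.P, WObj.Q, φ => InducedCategory.homMk (TypeCat.ofHom fun η => η ≫ hh G φ)
    | WObj.Q, WObj.P, φ => InducedCategory.homMk (TypeCat.ofHom fun η => η ≫ hh G φ)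
    | WObj.Q, WObj.Q, φ => InducedCategory.homMk (TypeCat.ofHom fun η => η ≫ hh G φ)
  map_id x := by
    cases x <;> (apply InducedCategory.hom_ext; refine tHomExt fun η => ?_; exact Category.comp_id η)
  map_comp {x y z} φ ψ := by
    cases x <;> cases y <;> cases z <;> (apply InducedCategory.hom_ext; refine tHomExt fun η => ?_; exact (Category.assoc η (hh G φ) (hh G ψ)).symm)

end CCatLayer


section Extraction

variable (G : B ⥤ Type v)

/-- The invariant `V` on classes. -/
noncomputable def Vbar {y : B} : (Qfun G).obj y → Option (G.obj y) :=
  Quot.lift (Vraw G) (fun _ _ h => Vraw_rel G h)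

/-- The normal form function on classes. -/
noncomputable def PNFbar {y : B} : (Pfun (B := B)).obj y → PRaw y :=
  Quot.lift PNFraw (fun _ _ h => PNFraw_rel h)

lemma hom_of_eq_praw {y : B} {p q : PRaw y} (h : p = q) {b₀ : B} (hp : b₀ = p.1)
    (hq : b₀ = q.1) : eqToHom hp ≫ p.2.2 = eqToHom hq ≫ q.2.2 := by
  subst h
  rfl

lemma extract (w' : WColim G (SF.{v, u} G ⋙ TF.{v, u, u'} G) ((TF.{v, u, u'} G).obj (qObj G)))
    (hw' : w'.e ((TF G).obj (qObj G)) (𝟙 ((TF G).obj (qObj G))) =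
      unitImage G (SF G) (qObj G) (TF G) ((wQ G).e (qObj G) (𝟙 (qObj G)))) :
    ∃ (b₀ : B) (g₀ : G.obj b₀) (x₀ : G ⟶ coyoneda.obj (op b₀)),
      ∀ (y : B) (h : G.obj y), G.map (x₀.app y h) g₀ = h := by
  classical
  -- Step 1: the pinned formula for the bijection at the test object.
  have pin : ∀ (F : (TF G).obj (qObj G) ⟶ tbObj G) (b : B) (g : G.obj b)
      (β : G ⟶ Pfun (B := B)),
      InducedCategory.Hom.hom ((w'.e (tbObj G) F).app b g) β =
        InducedCategory.Hom.hom F (β ≫ iota G b g) := by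
    intro F b g β
    have h1 := w'.nat (a := (TF G).obj (qObj G)) F (𝟙 _)
    rw [Category.id_comp, hw'] at h1
    rw [h1]
    show InducedCategory.Hom.hom F (β ≫ InducedCategory.Hom.hom
      ((InducedCategory.homMk (iota G b g) : pObj.{v, u} G ⟶ qObj G) ≫ 𝟙 (qObj G))) =
        InducedCategory.Hom.hom F (β ≫ iota G b g)
    rw [Category.comp_id]
    rfl
  -- Step 2: the factorization of γ through a single coend injection.
  have fact : ∃ (b₀ : B) (g₀ : G.obj b₀) (β : G ⟶ Pfun (B := B)),
      β ≫ iota G b₀ g₀ = gam G := by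
    by_contra hcon
    push_neg at hcon
    have hinj := (w'.e (tbObj G)).injective (a₁ :=
        (InducedCategory.homMk (TypeCat.ofHom fun δ => ULift.up (δ = gam G)) :
          (TF G).obj (qObj G) ⟶ tbObj G))
      (a₂ := (InducedCategory.homMk (TypeCat.ofHom fun _ => ULift.up False) :
        (TF G).obj (qObj G) ⟶ tbObj G))
      (by
        apply NatTrans.ext
        funext b
        refine tHomExt fun g => ?_
        apply InducedCategory.hom_ext
        refine tHomExt fun β => ?_
        refine (pin _ b g β).trans (Eq.trans ?_ (pin _ b g β).symm)
        exact congrArg ULift.up (propext (iff_false_intro (hcon b g β))))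
    have h2 : (gam G = gam G) = False :=
      congrArg (fun F : (TF G).obj (qObj G) ⟶ tbObj G => ULift.down (InducedCategory.Hom.hom F (gam G))) hinj
    exact h2 ▸ rfl
  obtain ⟨b₀, g₀, β, hβ⟩ := fact
  -- Step 3: pointwise analysis.
  have hval : ∀ (y : B) (h : G.obj y),
      Vbar G ((iota G b₀ g₀).app y (β.app y h)) = some h := by
    intro y h
    have : (iota G b₀ g₀).app y (β.app y h) = (gam G).app y h := by
      exact types_congr_hom (NatTrans.congr_app hβ y) h
    rw [this]
    show Vraw G ⟨y, h, ⟨y, [], 𝟙 y⟩⟩ = some h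
    show Vfin G y h (consume (nf []) (some ⟨y, 𝟙 y⟩)) = some h
    show Vfin G y h (some ⟨y, 𝟙 y⟩) = some h
    simp [Vfin]
  have main : ∀ (y : B) (h : G.obj y),
      (PNFbar (β.app y h)).2.1 = [] ∧ ∃ hc : b₀ = (PNFbar (β.app y h)).1,
        G.map (eqToHom hc ≫ (PNFbar (β.app y h)).2.2) g₀ = h := by
    intro y h
    obtain ⟨p, hp⟩ := Quot.exists_rep (β.app y h)
    have h1 := hval y h
    rw [← hp] at h1 ⊢
    exact Vraw_eq_some G g₀ p h1
  have hnat : ∀ (y y' : B) (f : y ⟶ y') (h : G.obj y),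
      PNFbar (β.app y' (G.map f h)) =
        ⟨(PNFbar (β.app y h)).1, (PNFbar (β.app y h)).2.1,
          (PNFbar (β.app y h)).2.2 ≫ f⟩ := by
    intro y y' f h
    have hb := NatTrans.naturality_apply β f h
    rw [hb]
    obtain ⟨p, hp⟩ := Quot.exists_rep (β.app y h)
    rw [← hp]
    exact PNFraw_map f p
  -- Step 4: assemble the natural retraction.
  refine ⟨b₀, g₀,
    { app := fun y => TypeCat.ofHom fun h => eqToHom (main y h).2.choose ≫ (PNFbar (β.app y h)).2.2
      naturality := ?_ }, ?_⟩
  · intro y y' f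
    refine tHomExt fun h => ?_
    show eqToHom (main y' (G.map f h)).2.choose ≫ (PNFbar (β.app y' (G.map f h))).2.2
        = (eqToHom (main y h).2.choose ≫ (PNFbar (β.app y h)).2.2) ≫ f
    rw [Category.assoc]
    exact hom_of_eq_praw (hnat y y' f h) (main y' (G.map f h)).2.choose
      ((main y h).2.choose)
  · intro y h
    exact (main y h).2.choose_spec

end Extraction


end AbsProof

/-- if `G : B ⥤ Type v` is a weight for absolute colimits (every `G`-weighted
colimit is preserved by every functor), then the corresponding profunctor `g : B ⇸ 𝟙` has a
left adjoint, given by `b ↦ Hom(G, B(b, −))`. -/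
theorem absolute_weight_gives_leftAdjoint_profunctor (G : B ⥤ Type v)
    (hG : ∀ {A : Type u} [Category.{v} A] {C : Type u'} [Category.{v} C]
      (S : Bᵒᵖ ⥤ A) (c : A) (w : WColim G S c) (T : A ⥤ C),
        ∃ w' : WColim G (S ⋙ T) (T.obj c),
          w'.e (T.obj c) (𝟙 (T.obj c)) = unitImage G S c T (w.e c (𝟙 c))) :
    Nonempty (ProfAdj (coyoneda ⋙ coyoneda.obj (op G)) G) := by
  obtain ⟨w', hw'⟩ := hG (AbsProof.SF G) (AbsProof.qObj G) (AbsProof.wQ G) (AbsProof.TF G)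
  obtain ⟨b₀, g₀, x₀, htri⟩ := AbsProof.extract G w' hw'
  refine ⟨{
    ε := fun {b b'} x y => x.app b y
    ε_natl := by intro b b' b'' h x y; rfl
    ε_natr := by
      intro b b' b'' k x y
      have hx := NatTrans.naturality_apply x k y
      exact hx
    b₀ := b₀
    g₀ := g₀
    x₀ := x₀
    tri₁ := by
      intro b x
      apply NatTrans.ext
      funext b'
      refine AbsProof.tHomExt fun y' => ?_
      have hx := NatTrans.naturality_apply x (x₀.app b' y') g₀
      rw [htri b' y'] at hx
      exact hx.symm
    tri₂ := htri }⟩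
end

section
/- Let B be a small category and G : B → Type*, corresponding to the profunctor g : B ⇸ 1. The following are equivalent: (i) g has a left adjoint profunctor; (ii) the representable functor Hom(G, −) : [B, Type*] → Type* preserves all small colimits; (iii) the functor G * − : [Bᵒᵖ, Type*] → Type* (weighted colimit with weight G) preserves the G-weighted limit {G, Y} of the Yoneda embedding Y : B → [Bᵒᵖ, Type*]. -/
open CategoryTheory Opposite

universe v u u'

variable {B : Type v} [SmallCategory B]

/-- Generating relation for the coend `∫^b G(b) × H(b)`. -/
def coendBRel (G : B ⥤ Type v) (H : Bᵒᵖ ⥤ Type v) :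
    (Σ b : B, G.obj b × H.obj (op b)) → (Σ b : B, G.obj b × H.obj (op b)) → Prop :=
  fun p q => ∃ (f : p.1 ⟶ q.1) (g : G.obj p.1) (y : H.obj (op q.1)),
    p.2 = (g, H.map f.op y) ∧ q.2 = (G.map f g, y)

/-- The coend `∫^b G(b) × H(b)`, i.e. the `G`-weighted colimit of the presheaf `H`. -/
def CoendB (G : B ⥤ Type v) (H : Bᵒᵖ ⥤ Type v) : Type v :=
  Quot (coendBRel G H)

/-- Functoriality of the coend in `H`. -/
def coendBMap (G : B ⥤ Type v) {H H' : Bᵒᵖ ⥤ Type v} (α : H ⟶ H') :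
    CoendB G H → CoendB G H' :=
  Quot.map (fun p => ⟨p.1, p.2.1, α.app (op p.1) p.2.2⟩) (by
    rintro ⟨b, g, x⟩ ⟨b', g', x'⟩ ⟨f, g₁, y, h1, h2⟩
    simp only [Prod.mk.injEq] at h1 h2
    refine ⟨f, g₁, α.app (op b') y, ?_, ?_⟩
    · simp only [Prod.mk.injEq]
      refine ⟨h1.1, ?_⟩
      rw [h1.2]
      exact NatTrans.naturality_apply α f.op y
    · simp only [Prod.mk.injEq]
      exact ⟨h2.1, congrArg (α.app (op b')) h2.2⟩)

/-- The weighted colimit functor `G * − : [Bᵒᵖ, Type v] ⥤ Type v`. -/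
def coendBFunctor (G : B ⥤ Type v) : (Bᵒᵖ ⥤ Type v) ⥤ Type v where
  obj H := CoendB G H
  map α := TypeCat.ofHom (coendBMap G α)
  map_id H := by
    ext q
    induction q using Quot.ind
    rfl
  map_comp α β := by
    ext q
    induction q using Quot.ind
    rfl

/-- The unit of the `G`-weighted limit `{G, Y}` of the Yoneda embedding, whose limit object
is the presheaf `b ↦ Hom(G, B(b, −))`. -/
def isbellUnit (G : B ⥤ Type v) :
    G ⟶ yoneda ⋙ coyoneda.obj (op (coyoneda ⋙ coyoneda.obj (op G))) where
  app b := TypeCat.ofHom fun g =>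
    { app := fun _ => TypeCat.ofHom fun η => η.app b g
      naturality := by
        intro z z' f
        ext η
        rfl }
  naturality := by
    intro b b' k
    ext g
    apply NatTrans.ext
    funext z
    ext η
    exact NatTrans.naturality_apply η k g

/-- The canonical comparison map expressing the preservation of the `G`-weighted limit
`{G, Y}` (of the Yoneda embedding, weighted by `G`) by the functor `G * −`. -/
def isbellCompare (G : B ⥤ Type v) :
    CoendB G (coyoneda ⋙ coyoneda.obj (op G)) → (G ⟶ yoneda ⋙ coendBFunctor G) :=
  fun z =>
    { app := fun b => TypeCat.ofHom fun g => (coendBFunctor G).map ((isbellUnit G).app b g) z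
      naturality := by
        intro b b' k
        ext g
        have h : (isbellUnit G).app b' (G.map k g) =
            (isbellUnit G).app b g ≫ yoneda.map k := by
          have h' := NatTrans.naturality_apply (isbellUnit G) k g
          dsimp at h'
          exact h'
        dsimp
        rw [h, Functor.map_comp]
        rfl }

namespace ProfTFAE

open Limits

/-- `G` is a retract of the representable `B(b₀, −)` via a point `g₀`. -/
structure SplitData (G : B ⥤ Type v) where
  b₀ : B
  g₀ : G.obj b₀
  θ : G ⟶ coyoneda.obj (op b₀)
  retr : ∀ (b : B) (y : G.obj b), G.map (θ.app b y) g₀ = y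

variable (G : B ⥤ Type v)

def SplitData.ofAdj {F : Bᵒᵖ ⥤ Type v} (A : ProfAdj F G) : SplitData G where
  b₀ := A.b₀
  g₀ := A.g₀
  θ :=
    { app := fun b => TypeCat.ofHom fun y => A.ε A.x₀ y
      naturality := fun b b' k => by
        ext y
        exact A.ε_natr k A.x₀ y }
  retr := fun b y => A.tri₂ b y

namespace SplitData

variable {G} (S : SplitData G)

/-- The idempotent on `b₀`. -/
def e : S.b₀ ⟶ S.b₀ := S.θ.app S.b₀ S.g₀

lemma theta_natural {b b' : B} (k : b ⟶ b') (y : G.obj b) :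
    S.θ.app b' (G.map k y) = S.θ.app b y ≫ k :=
  NatTrans.naturality_apply S.θ k y

lemma e_absorb (b : B) (y : G.obj b) : S.e ≫ S.θ.app b y = S.θ.app b y := by
  have h := S.theta_natural (S.θ.app b y) S.g₀
  rw [S.retr] at h
  exact h.symm

lemma e_idem : S.e ≫ S.e = S.e := S.e_absorb S.b₀ S.g₀

lemma map_e_g₀ : G.map S.e S.g₀ = S.g₀ := S.retr S.b₀ S.g₀

/-- The left adjoint presheaf: the image of the idempotent `e` on `B(−, b₀)`. -/
def F : Bᵒᵖ ⥤ Type v where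
  obj b := { x : b.unop ⟶ S.b₀ // x ≫ S.e = x }
  map h := TypeCat.ofHom fun x => ⟨h.unop ≫ x.val, by rw [Category.assoc, x.prop]⟩
  map_id b := by ext x; exact Category.id_comp x.val
  map_comp h h' := by ext x; exact Category.assoc _ _ _

def toAdj : ProfAdj S.F G where
  ε {b b'} x y := x.val ≫ S.θ.app b y
  ε_natl h x y := Category.assoc _ _ _
  ε_natr k x y := by
    show x.val ≫ S.θ.app _ (G.map k y) = (x.val ≫ S.θ.app _ y) ≫ k
    rw [S.theta_natural k y, Category.assoc]
  b₀ := S.b₀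
  g₀ := S.g₀
  x₀ := ⟨S.e, S.e_idem⟩
  tri₁ := fun b x => by
    apply Subtype.ext
    show (x.val ≫ S.θ.app S.b₀ S.g₀) ≫ S.e = x.val
    show (x.val ≫ S.e) ≫ S.e = x.val
    rw [x.prop, x.prop]
  tri₂ := fun b y => by
    show G.map (S.e ≫ S.θ.app b y) S.g₀ = y
    rw [FunctorToTypes.map_comp_apply, S.map_e_g₀, S.retr]

lemma adj (S : SplitData G) : ∃ F : Bᵒᵖ ⥤ Type v, Nonempty (ProfAdj F G) :=
  ⟨SplitData.F S, ⟨SplitData.toAdj S⟩⟩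

end SplitData

section Preserves

/-- Transfer a cocone along a retraction of functors. -/
@[reducible]
def retractCocone {C : Type*} [Category C] {D : Type*} [Category D]
    {P E : C ⥤ D} (r : E ⟶ P) {J : Type*} [Category J] {K : J ⥤ C}
    (s : Limits.Cocone (K ⋙ P)) : Limits.Cocone (K ⋙ E) where
  pt := s.pt
  ι :=
    { app := fun j => r.app (K.obj j) ≫ s.ι.app j
      naturality := fun j j' f => by
        have h1 := r.naturality (K.map f)
        have h2 := s.w f
        dsimp at h2 ⊢
        rw [Category.comp_id, ← Category.assoc, h1, Category.assoc, h2] }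

/-- A retract of a colimit-preserving functor preserves colimits. -/
lemma preservesColimits_of_retract {C : Type*} [Category C] {D : Type*} [Category D]
    {P E : C ⥤ D} (i : P ⟶ E) (r : E ⟶ P) (hir : i ≫ r = 𝟙 P)
    [PreservesColimitsOfSize.{w, w'} E] : PreservesColimitsOfSize.{w, w'} P := by
  constructor
  intro J _
  constructor
  intro K
  constructor
  intro c hc
  have hE := isColimitOfPreserves E hc
  have hcomp : ∀ (X : C), i.app X ≫ r.app X = 𝟙 (P.obj X) := fun X => by
    rw [← NatTrans.comp_app, hir]; rfl
  refine ⟨{ desc := fun s => i.app c.pt ≫ hE.desc (retractCocone r s),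
            fac := ?_, uniq := ?_ }⟩
  · intro s j
    have h1 := i.naturality (c.ι.app j)
    have h2 := hE.fac (retractCocone r s) j
    dsimp at h1 h2 ⊢
    rw [← Category.assoc, h1, Category.assoc, h2]
    show i.app (K.obj j) ≫ r.app (K.obj j) ≫ s.ι.app j = s.ι.app j
    rw [← Category.assoc, hcomp, Category.id_comp]
  · intro s m hm
    have key : r.app c.pt ≫ m = hE.desc (retractCocone r s) := by
      apply hE.uniq (retractCocone r s)
      intro j
      have h1 := r.naturality (c.ι.app j)
      have h3 := hm j
      dsimp at h1 h3 ⊢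
      show E.map (c.ι.app j) ≫ r.app c.pt ≫ m = r.app (K.obj j) ≫ s.ι.app j
      rw [← Category.assoc, h1, Category.assoc, h3]
    show m = i.app c.pt ≫ hE.desc (retractCocone r s)
    rw [← key, ← Category.assoc, hcomp, Category.id_comp]

variable (G : B ⥤ Type v)

/-- Hom out of a corepresentable is evaluation. -/
def corepEvalIso (b₀ : B) :
    coyoneda.obj (op (coyoneda.obj (op b₀) : B ⥤ Type v)) ≅ (evaluation B (Type v)).obj b₀ :=
  NatIso.ofComponents
    (fun H =>
      { hom := TypeCat.ofHom fun η => η.app b₀ (𝟙 b₀)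
        inv := TypeCat.ofHom fun x =>
          { app := fun b => TypeCat.ofHom fun f => H.map f x
            naturality := fun b b' k => by
              ext f
              exact FunctorToTypes.map_comp_apply H f k x }
        hom_inv_id := by
          ext η
          apply NatTrans.ext
          funext b
          ext f
          have := NatTrans.naturality_apply η f (𝟙 b₀)
          dsimp at this ⊢
          rw [← this, Category.id_comp]
        inv_hom_id := by
          ext x
          exact FunctorToTypes.map_id_apply H x })
    (fun {H H'} α => by
      ext η
      rfl)

/-- The map `B(b₀,−) ⟶ G` determined by `g₀`. -/
def pointMap (b₀ : B) (g₀ : G.obj b₀) : (coyoneda.obj (op b₀) : B ⥤ Type v) ⟶ G where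
  app b := TypeCat.ofHom fun f => G.map f g₀
  naturality := fun b b' k => by
    ext f
    exact FunctorToTypes.map_comp_apply G f k g₀

lemma SplitData.preserves {G : B ⥤ Type v} (S : SplitData G) :
    Limits.PreservesColimits (coyoneda.obj (op G)) := by
  have hE : Limits.PreservesColimits
      (coyoneda.obj (op (coyoneda.obj (op S.b₀) : B ⥤ Type v))) :=
    Limits.preservesColimits_of_natIso (corepEvalIso S.b₀).symm
  have hσθ : S.θ ≫ pointMap G S.b₀ S.g₀ = 𝟙 G := by
    apply NatTrans.ext
    funext b
    ext y
    exact S.retr b y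
  refine preservesColimits_of_retract
    (coyoneda.map (pointMap G S.b₀ S.g₀).op) (coyoneda.map S.θ.op) ?_
  rw [← Functor.map_comp, ← op_comp, hσθ, op_id]
  exact CategoryTheory.Functor.map_id coyoneda (op G)

end Preserves

section Elements

variable (G : B ⥤ Type v)

/-- (The opposite of) the category of elements of `G`. -/
structure ElemCat (G : B ⥤ Type v) where
  b : B
  g : G.obj b

instance : Category.{v} (ElemCat G) where
  Hom p q := { f : q.b ⟶ p.b // G.map f q.g = p.g }
  id p := ⟨𝟙 p.b, FunctorToTypes.map_id_apply G p.g⟩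
  comp {p q r} u w := ⟨w.val ≫ u.val, by
    rw [FunctorToTypes.map_comp_apply, w.prop, u.prop]⟩
  id_comp := by intros; apply Subtype.ext; simp
  comp_id := by intros; apply Subtype.ext; simp
  assoc := by intros; apply Subtype.ext; simp

/-- The canonical diagram of representables associated to `G`. -/
@[reducible]
def elemDiagram : ElemCat G ⥤ (B ⥤ Type v) where
  obj p := coyoneda.obj (op p.b)
  map u := coyoneda.map u.val.op
  map_id p := by
    show coyoneda.map (𝟙 p.b).op = _
    rw [op_id]
    exact CategoryTheory.Functor.map_id coyoneda (op p.b)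
  map_comp {p q r} u w := by
    show coyoneda.map (w.val ≫ u.val).op = _
    rw [op_comp, Functor.map_comp]

/-- The canonical cocone on `elemDiagram G` with apex `G`. -/
@[reducible]
def elemCocone : Limits.Cocone (elemDiagram G) where
  pt := G
  ι :=
    { app := fun p =>
        { app := fun b => TypeCat.ofHom fun h => G.map h p.g
          naturality := fun b b' k => by
            ext h
            exact FunctorToTypes.map_comp_apply G h k p.g }
      naturality := fun p q u => by
        apply NatTrans.ext
        funext b
        ext h
        change p.b ⟶ b at h
        show G.map (u.val ≫ h) q.g = G.map h p.g
        rw [FunctorToTypes.map_comp_apply, u.prop] }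

/-- Every copresheaf is the colimit of its canonical diagram of representables. -/
def elemIsColimit : Limits.IsColimit (elemCocone G) where
  desc s :=
    { app := fun b => TypeCat.ofHom fun g => (s.ι.app ⟨b, g⟩).app b (𝟙 b)
      naturality := fun b b' k => by
        ext g
        have hw := s.w (⟨k, rfl⟩ : (⟨b', G.map k g⟩ : ElemCat G) ⟶ ⟨b, g⟩)
        have hw' := ConcreteCategory.congr_hom (congrFun (congrArg NatTrans.app hw) b') (𝟙 b')
        have hn := NatTrans.naturality_apply (s.ι.app ⟨b, g⟩) k (𝟙 b)
        dsimp [elemDiagram, elemCocone] at hw' hn ⊢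
        show (s.ι.app ⟨b', G.map k g⟩).app b' (𝟙 b') = s.pt.map k ((s.ι.app ⟨b, g⟩).app b (𝟙 b))
        rw [← hw']
        rw [Category.comp_id] at hw' ⊢
        rw [← hn, Category.id_comp]
      }
  fac s p := by
    apply NatTrans.ext
    funext b
    ext h
    have hw := s.w (⟨h, rfl⟩ : (⟨b, G.map h p.g⟩ : ElemCat G) ⟶ p)
    have hw' := ConcreteCategory.congr_hom (congrFun (congrArg NatTrans.app hw) b) (𝟙 b)
    dsimp [elemDiagram, elemCocone] at hw' ⊢
    show (s.ι.app ⟨b, G.map h p.g⟩).app b (𝟙 b) = (s.ι.app p).app b h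
    rw [← hw', Category.comp_id]
  uniq s m hm := by
    apply NatTrans.ext
    funext b
    ext g
    have h1 := ConcreteCategory.congr_hom (congrFun (congrArg NatTrans.app (hm ⟨b, g⟩)) b) (𝟙 b)
    dsimp [elemCocone] at h1 ⊢
    change (m.app b) (G.map (𝟙 b) g) = _ at h1
    rw [← h1, FunctorToTypes.map_id_apply]

lemma splitData_of_preserves (h : Limits.PreservesColimits (coyoneda.obj (op G))) :
    Nonempty (SplitData G) := by
  have hc := Limits.isColimitOfPreserves (coyoneda.obj (op G)) (elemIsColimit G)
  obtain ⟨⟨b₀, g₀⟩, θ, hθ⟩ := Limits.Types.jointly_surjective _ hc (𝟙 G)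
  refine ⟨⟨b₀, g₀, θ, fun b y => ?_⟩⟩
  have h1 : θ ≫ (elemCocone G).ι.app ⟨b₀, g₀⟩ = 𝟙 G := hθ
  have h2 := ConcreteCategory.congr_hom (congrFun (congrArg NatTrans.app h1) b) y
  dsimp [elemCocone] at h2
  exact h2

end Elements

section Isbell

variable (G : B ⥤ Type v)

/-- Evaluation collapsing the coend `∫^b' G(b') × B(b', b) ≅ G(b)`. -/
def coendEval (b : B) : CoendB G (yoneda.obj b) → G.obj b :=
  Quot.lift (fun p => G.map p.2.2 p.2.1) (by
    rintro ⟨b₁, g, x⟩ ⟨b₂, g', x'⟩ ⟨f, g₁, y, h1, h2⟩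
    simp only [Prod.mk.injEq] at h1 h2
    obtain ⟨rfl, hx⟩ := h1
    obtain ⟨hg', hx'⟩ := h2
    dsimp
    rw [hx, hx', hg']
    show G.map (f ≫ y) g = G.map y (G.map f g)
    rw [FunctorToTypes.map_comp_apply])

/-- The canonical element of `G ⟶ yoneda ⋙ coendBFunctor G`. -/
def idElem : G ⟶ yoneda ⋙ coendBFunctor G where
  app b := TypeCat.ofHom fun g => Quot.mk _ ⟨b, g, 𝟙 b⟩
  naturality := fun b b' k => by
    ext g
    show (Quot.mk _ ⟨b', G.map k g, 𝟙 b'⟩ : CoendB G (yoneda.obj b')) =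
      Quot.mk _ ⟨b, g, (yoneda.map k).app (op b) (𝟙 b)⟩
    refine (Quot.sound ⟨k, g, 𝟙 b', ?_, rfl⟩).symm
    show ((g, (yoneda.map k).app (op b) (𝟙 b)) : _) = (g, (yoneda.obj b').map k.op (𝟙 b'))
    have : ((yoneda.map k).app (op b) (𝟙 b) : b ⟶ b') = (yoneda.obj b').map k.op (𝟙 b') := by
      show 𝟙 b ≫ k = k ≫ 𝟙 b'
      simp
    rw [this]

lemma splitData_of_surjective (h : Function.Surjective (isbellCompare G)) :
    Nonempty (SplitData G) := by
  obtain ⟨z, hz⟩ := h (idElem G)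
  obtain ⟨⟨b₀, g₀, η₀⟩, rfl⟩ := Quot.exists_rep z
  refine ⟨⟨b₀, g₀, η₀, fun b y => ?_⟩⟩
  have h1 := ConcreteCategory.congr_hom (congrArg (fun t => NatTrans.app t b) hz) y
  have h2 := congrArg (coendEval G b) h1
  show G.map (η₀.app b y) g₀ = y
  have h3 : coendEval G b ((isbellCompare G (Quot.mk _ ⟨b₀, g₀, η₀⟩)).app b y) =
      G.map (η₀.app b y) g₀ := rfl
  have h4 : coendEval G b ((idElem G).app b y) = G.map (𝟙 b) y := rfl
  rw [h3, h4, FunctorToTypes.map_id_apply] at h2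
  exact h2

variable {G}

/-- The comparison `yoneda.obj b₀ ⟶ (coyoneda ⋙ coyoneda.obj (op G))` induced by `θ`. -/
def SplitData.mu (S : SplitData G) :
    yoneda.obj S.b₀ ⟶ (coyoneda ⋙ coyoneda.obj (op G)) where
  app c := TypeCat.ofHom fun f =>
    { app := fun b => TypeCat.ofHom fun y => f ≫ S.θ.app b y
      naturality := fun b b'' k => by
        ext y
        show f ≫ S.θ.app b'' (G.map k y) = (f ≫ S.θ.app b y) ≫ k
        rw [S.theta_natural, Category.assoc] }
  naturality := fun c c' w => by
    ext f
    apply NatTrans.ext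
    funext b
    ext y
    show (w.unop ≫ f) ≫ S.θ.app b y = w.unop ≫ (f ≫ S.θ.app b y)
    rw [Category.assoc]

/-- The inverse to `isbellCompare G` provided by split data. -/
def SplitData.invMap (S : SplitData G) :
    (G ⟶ yoneda ⋙ coendBFunctor G) → CoendB G (coyoneda ⋙ coyoneda.obj (op G)) :=
  fun α => coendBMap G S.mu (α.app S.b₀ S.g₀)

lemma SplitData.rightInv (S : SplitData G) (α : G ⟶ yoneda ⋙ coendBFunctor G) :
    isbellCompare G (S.invMap α) = α := by
  apply NatTrans.ext
  funext b
  ext g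
  show (coendBFunctor G).map ((isbellUnit G).app b g)
      (coendBMap G S.mu (α.app S.b₀ S.g₀)) = α.app b g
  have h1 : ∀ (t : CoendB G (yoneda.obj S.b₀)),
      (coendBFunctor G).map ((isbellUnit G).app b g) (coendBMap G S.mu t)
        = coendBMap G (yoneda.map (S.θ.app b g)) t := by
    intro t
    induction t using Quot.ind
    rfl
  refine (h1 _).trans ?_
  have h2 := NatTrans.naturality_apply α (S.θ.app b g) S.g₀
  dsimp at h2
  have h3 : coendBMap G (yoneda.map (S.θ.app b g)) (α.app S.b₀ S.g₀) =
      α.app b (G.map (S.θ.app b g) S.g₀) := h2.symm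
  rw [h3, S.retr]

lemma SplitData.leftInv (S : SplitData G)
    (z : CoendB G (coyoneda ⋙ coyoneda.obj (op G))) :
    S.invMap (isbellCompare G z) = z := by
  induction z using Quot.ind with | _ p => ?_
  obtain ⟨b₁, g₁, η₁⟩ := p
  have key : S.mu.app (op b₁) (η₁.app S.b₀ S.g₀) = η₁ := by
    apply NatTrans.ext
    funext b
    ext y
    have hn := NatTrans.naturality_apply η₁ (S.θ.app b y) S.g₀
    dsimp at hn ⊢
    show η₁.app S.b₀ S.g₀ ≫ S.θ.app b y = η₁.app b y
    rw [← hn, S.retr]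
  show (Quot.mk _ ⟨b₁, g₁, S.mu.app (op b₁) (η₁.app S.b₀ S.g₀)⟩ :
      CoendB G (coyoneda ⋙ coyoneda.obj (op G))) = _
  exact congrArg
        (fun η => (Quot.mk _ ⟨b₁, g₁, η⟩ : CoendB G (coyoneda ⋙ coyoneda.obj (op G)))) key

lemma SplitData.bijective (S : SplitData G) : Function.Bijective (isbellCompare G) :=
  Function.bijective_iff_has_inverse.mpr ⟨S.invMap, S.leftInv, S.rightInv⟩

end Isbell

end ProfTFAE


/-- for `G : B ⥤ Type v` (corresponding to a profunctor `g : B ⇸ 𝟙`), the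
following are equivalent: (i) `g` has a left adjoint profunctor; (ii) `Hom(G, −)` preserves
all small colimits; (iii) `G * −` preserves the `G`-weighted limit `{G, Y}` of the Yoneda
embedding (expressed by the bijectivity of the canonical comparison map). -/
theorem profunctor_leftAdjoint_tfae (G : B ⥤ Type v) :
    ((∃ F : Bᵒᵖ ⥤ Type v, Nonempty (ProfAdj F G)) ↔
        Nonempty (Limits.PreservesColimits (coyoneda.obj (op G)))) ∧
      ((∃ F : Bᵒᵖ ⥤ Type v, Nonempty (ProfAdj F G)) ↔
        Function.Bijective (isbellCompare G)) := by
  constructor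
  · constructor
    · rintro ⟨F, ⟨A⟩⟩
      exact ⟨(ProfTFAE.SplitData.ofAdj G A).preserves⟩
    · rintro ⟨h⟩
      obtain ⟨S⟩ := ProfTFAE.splitData_of_preserves G h
      exact S.adj
  · constructor
    · rintro ⟨F, ⟨A⟩⟩
      exact (ProfTFAE.SplitData.ofAdj G A).bijective
    · intro h
      obtain ⟨S⟩ := ProfTFAE.splitData_of_surjective G h.2
      exact S.adj
end
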